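/- arXiv:2512.13195 — 3 statements merged into one kernel-verified Lean document; each statement's English description precedes it below -/
import Mathlib

section
/- Suppose there exists ν₀ > 0 such that every z ∈ ℂ with det Δ(z) = 0 satisfies Re(z) < −ν₀. Then for every 0 < ν < ν₀, the infimum of |det Δ(z)| over the closed half-plane {z ∈ ℂ : Re(z) ≥ −ν} is strictly positive. -/
open MeasureTheory Matrix Filter Complex Topology

attribute [local instance] Matrix.frobeniusNormedAddCommGroup Matrix.frobeniusNormedSpace

namespace DetCharAux

variable {n : ℕ} {τs : ℝ} {A : ℕ → Matrix (Fin n) (Fin n) ℝ} {τ : ℕ → ℝ}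
  {N : ℝ → Matrix (Fin n) (Fin n) ℝ}

noncomputable instance instCENormMatR : ContinuousENorm (Matrix (Fin n) (Fin n) ℝ) :=
  SeminormedAddGroup.toContinuousENorm

noncomputable instance instCENormMatC : ContinuousENorm (Matrix (Fin n) (Fin n) ℂ) :=
  SeminormedAddGroup.toContinuousENorm

lemma entry_norm_le (M : Matrix (Fin n) (Fin n) ℂ) (i j : Fin n) : ‖M i j‖ ≤ ‖M‖ := by
  rw [Matrix.frobenius_norm_def]
  have h0 : (0:ℝ) ≤ ‖M i j‖ := norm_nonneg _
  have h2 : ‖M i j‖ ^ (2:ℝ) ≤ ∑ i', ∑ j', ‖M i' j'‖ ^ (2:ℝ) := by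
    calc ‖M i j‖ ^ (2:ℝ) ≤ ∑ j', ‖M i j'‖ ^ (2:ℝ) :=
          Finset.single_le_sum (fun _ _ => Real.rpow_nonneg (norm_nonneg _) _) (Finset.mem_univ j)
      _ ≤ _ := Finset.single_le_sum (f := fun i' => ∑ j', ‖M i' j'‖ ^ (2:ℝ))
          (fun _ _ => Finset.sum_nonneg fun _ _ => Real.rpow_nonneg (norm_nonneg _) _)
          (Finset.mem_univ i)
  calc ‖M i j‖ = (‖M i j‖ ^ (2:ℝ)) ^ (1/2:ℝ) := by rw [← Real.rpow_mul h0]; norm_num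
    _ ≤ _ := Real.rpow_le_rpow (Real.rpow_nonneg h0 _) h2 (by norm_num)

noncomputable def entryCLM (i j : Fin n) : Matrix (Fin n) (Fin n) ℂ →L[ℂ] ℂ :=
  LinearMap.mkContinuous
    { toFun := fun M => M i j
      map_add' := fun _ _ => rfl
      map_smul' := fun _ _ => rfl } 1 fun M => by
        rw [one_mul]; exact entry_norm_le M i j

lemma differentiable_det {Φ : ℂ → Matrix (Fin n) (Fin n) ℂ} (hΦ : Differentiable ℂ Φ) :
    Differentiable ℂ fun z => (Φ z).det := by
  have h : (fun z => (Φ z).det)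
      = fun z => ∑ σ : Equiv.Perm (Fin n), ((Equiv.Perm.sign σ : ℤ) : ℂ) * ∏ i, Φ z (σ i) i := by
    funext z; rw [Matrix.det_apply']
  rw [h]
  refine Differentiable.fun_sum fun σ _ => Differentiable.const_mul ?_ _
  exact Differentiable.fun_finsetProd fun i _ => (entryCLM (σ i) i).differentiable.comp hΦ

noncomputable def Eterm (A : ℕ → Matrix (Fin n) (Fin n) ℝ) (τ : ℕ → ℝ) (k : ℕ) (z : ℂ) :
    Matrix (Fin n) (Fin n) ℂ := Complex.exp (-(τ k : ℂ) * z) • (A k).map Complex.ofReal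

lemma norm_map_ofReal (M : Matrix (Fin n) (Fin n) ℝ) : ‖M.map Complex.ofReal‖ = ‖M‖ :=
  Matrix.frobenius_norm_map_eq _ _ fun a => Complex.norm_real a

lemma norm_Eterm (hτ : ∀ k, τ k ∈ Set.Ioc 0 τs) {b : ℝ} (hb : 0 ≤ b) {z : ℂ}
    (hz : -b ≤ z.re) (k : ℕ) : ‖Eterm A τ k z‖ ≤ ‖A k‖ * Real.exp (τs * b) := by
  rw [Eterm, norm_smul, norm_map_ofReal, Complex.norm_exp]
  have hre : (-(τ k : ℂ) * z).re = -(τ k * z.re) := by simp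
  have h1 : -(τ k * z.re) ≤ τs * b := by
    have e0 : -(τ k * z.re) = τ k * (-z.re) := by ring
    have e1 : τ k * (-z.re) ≤ τ k * b :=
      mul_le_mul_of_nonneg_left (neg_le.mpr hz) (hτ k).1.le
    have e2 : τ k * b ≤ τs * b := mul_le_mul_of_nonneg_right (hτ k).2 hb
    linarith
  rw [hre, mul_comm]
  exact mul_le_mul_of_nonneg_left (Real.exp_le_exp.2 h1) (norm_nonneg _)

lemma norm_Eterm_far (hτ : ∀ k, τ k ∈ Set.Ioc 0 τs) (hτmono : StrictMono τ) {m : ℝ}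
    (hm : 0 ≤ m) {z : ℂ} (hz : m ≤ z.re) (k : ℕ) :
    ‖Eterm A τ k z‖ ≤ ‖A k‖ * Real.exp (-(τ 0 * m)) := by
  rw [Eterm, norm_smul, norm_map_ofReal, Complex.norm_exp]
  have hre : (-(τ k : ℂ) * z).re = -(τ k * z.re) := by simp
  have h1 : -(τ k * z.re) ≤ -(τ 0 * m) := by
    have e1 : τ 0 * m ≤ τ k * m :=
      mul_le_mul_of_nonneg_right (hτmono.monotone (Nat.zero_le k)) hm
    have e2 : τ k * m ≤ τ k * z.re := mul_le_mul_of_nonneg_left hz (hτ k).1.le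
    linarith
  rw [hre, mul_comm]
  exact mul_le_mul_of_nonneg_left (Real.exp_le_exp.2 h1) (norm_nonneg _)

lemma summable_dE (hA : Summable fun k => ‖A k‖) (hτ : ∀ k, τ k ∈ Set.Ioc 0 τs)
    {d : ℕ → ℂ} (hd : ∀ k, ‖d k‖ ≤ 1) (z : ℂ) :
    Summable fun k => d k • Eterm A τ k z := by
  refine Summable.of_norm_bounded (g := fun k => ‖A k‖ * Real.exp (τs * max 0 (-z.re)))
    (hA.mul_right _) fun k => ?_
  rw [norm_smul]
  calc ‖d k‖ * ‖Eterm A τ k z‖ ≤ 1 * ‖Eterm A τ k z‖ :=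
        mul_le_mul_of_nonneg_right (hd k) (norm_nonneg _)
    _ = ‖Eterm A τ k z‖ := one_mul _
    _ ≤ _ := norm_Eterm hτ (le_max_left _ _) (neg_le.mpr (le_max_right 0 (-z.re))) k

lemma hasDerivAt_Eterm (k : ℕ) (z : ℂ) :
    HasDerivAt (fun w => Eterm A τ k w)
      ((-(τ k : ℂ) * Complex.exp (-(τ k : ℂ) * z)) • (A k).map Complex.ofReal) z := by
  have hexp : HasDerivAt (fun w : ℂ => Complex.exp (-(τ k : ℂ) * w))
      (-(τ k : ℂ) * Complex.exp (-(τ k : ℂ) * z)) z := by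
    simpa [mul_comm] using ((hasDerivAt_id z).const_mul (-(τ k : ℂ))).cexp
  exact hexp.smul_const _

lemma norm_deriv_Eterm (hτ : ∀ k, τ k ∈ Set.Ioc 0 τs) {b : ℝ} (hb : 0 ≤ b) {z : ℂ}
    (hz : -b ≤ z.re) (k : ℕ) :
    ‖(-(τ k : ℂ) * Complex.exp (-(τ k : ℂ) * z)) • (A k).map Complex.ofReal‖
      ≤ ‖A k‖ * (τs * Real.exp (τs * b)) := by
  rw [norm_smul, norm_mul]
  have h1 : ‖(-(τ k : ℂ))‖ = τ k := by
    rw [norm_neg, Complex.norm_real]; exact abs_of_pos (hτ k).1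
  have h2 : ‖Complex.exp (-(τ k : ℂ) * z)‖ ≤ Real.exp (τs * b) := by
    rw [Complex.norm_exp]
    apply Real.exp_le_exp.2
    have hre : (-(τ k : ℂ) * z).re = -(τ k * z.re) := by simp
    rw [hre]
    have e0 : -(τ k * z.re) = τ k * (-z.re) := by ring
    have e1 : τ k * (-z.re) ≤ τ k * b := mul_le_mul_of_nonneg_left (neg_le.mpr hz) (hτ k).1.le
    have e2 : τ k * b ≤ τs * b := mul_le_mul_of_nonneg_right (hτ k).2 hb
    linarith
  have h3 : ‖(A k).map Complex.ofReal‖ = ‖A k‖ := norm_map_ofReal _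
  rw [h1, h3]
  calc τ k * ‖Complex.exp (-(τ k : ℂ) * z)‖ * ‖A k‖
      ≤ τs * Real.exp (τs * b) * ‖A k‖ := by
        apply mul_le_mul_of_nonneg_right _ (norm_nonneg _)
        exact mul_le_mul (hτ k).2 h2 (norm_nonneg _) (le_of_lt (lt_of_lt_of_le (hτ k).1 (hτ k).2))
    _ = ‖A k‖ * (τs * Real.exp (τs * b)) := by ring

lemma differentiable_TT (hA : Summable fun k => ‖A k‖) (hτ : ∀ k, τ k ∈ Set.Ioc 0 τs)
    {d : ℕ → ℂ} (hd : ∀ k, ‖d k‖ ≤ 1)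
    (hsum : ∀ z : ℂ, Summable fun k => d k • Eterm A τ k z) :
    Differentiable ℂ fun z => ∑' k, d k • Eterm A τ k z := by
  intro z₀
  set b : ℝ := max 0 (-z₀.re) + 1 with hbdef
  have hb : 0 ≤ b := by positivity
  have hz₀ : z₀ ∈ {z : ℂ | -b < z.re} := by
    have := le_max_right 0 (-z₀.re); simp only [Set.mem_setOf_eq]; linarith
  have hder := hasDerivAt_tsum_of_isPreconnected
    (u := fun k => ‖A k‖ * (τs * Real.exp (τs * b)))
    (g := fun k z => d k • Eterm A τ k z)
    (g' := fun k z => d k • ((-(τ k : ℂ) * Complex.exp (-(τ k : ℂ) * z)) • (A k).map Complex.ofReal))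
    (hA.mul_right _) (isOpen_lt continuous_const Complex.continuous_re)
    (convex_halfSpace_re_gt (-b)).isPreconnected
    (fun k y _ => (hasDerivAt_Eterm k y).const_smul (d k))
    (fun k y hy => by
      rw [norm_smul]
      calc ‖d k‖ * ‖(-(τ k : ℂ) * Complex.exp (-(τ k : ℂ) * y)) • (A k).map Complex.ofReal‖
          ≤ 1 * ‖(-(τ k : ℂ) * Complex.exp (-(τ k : ℂ) * y)) • (A k).map Complex.ofReal‖ :=
            mul_le_mul_of_nonneg_right (hd k) (norm_nonneg _)
        _ = _ := one_mul _
        _ ≤ _ := norm_deriv_Eterm hτ hb (le_of_lt hy) k)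
    hz₀ (hsum z₀) hz₀
  exact hder.differentiableAt

lemma aesm_Nc (hN : IntegrableOn N (Set.Ioo 0 τs)) :
    AEStronglyMeasurable (fun s => (N s).map Complex.ofReal) (volume.restrict (Set.Ioo 0 τs)) :=
  (continuous_id.matrix_map Complex.continuous_ofReal).comp_aestronglyMeasurable
    hN.aestronglyMeasurable

lemma integrableOn_exp_smul (hN : IntegrableOn N (Set.Ioo 0 τs)) (w : ℂ) :
    IntegrableOn (fun s : ℝ => Complex.exp (-w * s) • (N s).map Complex.ofReal)
      (Set.Ioo 0 τs) := by
  refine Integrable.mono' (g := fun s => Real.exp (|w.re| * τs) * ‖N s‖)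
    (hN.norm.const_mul _) ?_ ?_
  · exact (Continuous.aestronglyMeasurable (f := fun s : ℝ => Complex.exp (-w * s)) (by fun_prop)).smul (aesm_Nc hN)
  · filter_upwards [ae_restrict_mem measurableSet_Ioo] with s hs
    rw [norm_smul, norm_map_ofReal, Complex.norm_exp]
    have hre : (-w * (s : ℂ)).re = -(w.re * s) := by simp
    have h1 : -(w.re * s) ≤ |w.re| * τs := by
      nlinarith [neg_abs_le w.re, le_abs_self w.re, hs.1, hs.2, abs_nonneg w.re]
    rw [hre]
    exact mul_le_mul_of_nonneg_right (Real.exp_le_exp.2 h1) (norm_nonneg _)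

lemma differentiable_RR (hτs : 0 < τs) (hN : IntegrableOn N (Set.Ioo 0 τs)) :
    Differentiable ℂ fun z =>
      ∫ s in Set.Ioo (0:ℝ) τs, Complex.exp (-z * s) • (N s).map Complex.ofReal := by
  intro z₀
  have hball : ∀ x ∈ Metric.ball z₀ 1, -x.re ≤ |z₀.re| + 1 := by
    intro x hx
    have h1 : |x.re - z₀.re| ≤ ‖(x - z₀)‖ := by
      simpa using Complex.abs_re_le_norm (x - z₀)
    have h2 : ‖(x - z₀)‖ < 1 := by
      simpa [Complex.dist_eq] using hx
    have h3 := abs_le.1 h1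
    have h4 := neg_abs_le z₀.re
    linarith [h3.1]
  obtain ⟨-, hd⟩ := hasDerivAt_integral_of_dominated_loc_of_deriv_le
    (μ := volume.restrict (Set.Ioo (0:ℝ) τs))
    (F := fun z s => Complex.exp (-z * s) • (N s).map Complex.ofReal)
    (F' := fun z s => ((-(s:ℂ)) * Complex.exp (-z * s)) • (N s).map Complex.ofReal)
    (x₀ := z₀)
    (bound := fun s => τs * Real.exp ((|z₀.re| + 1) * τs) * ‖N s‖)
    (Metric.ball_mem_nhds z₀ one_pos)
    (Eventually.of_forall fun x =>
      (Continuous.aestronglyMeasurable (f := fun s : ℝ => Complex.exp (-x * s)) (by fun_prop)).smul (aesm_Nc hN))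
    (integrableOn_exp_smul hN z₀)
    ((Continuous.aestronglyMeasurable (f := fun s : ℝ => (-(s:ℂ)) * Complex.exp (-z₀ * s)) (by fun_prop)).smul (aesm_Nc hN))
    (by
      filter_upwards [ae_restrict_mem measurableSet_Ioo] with s hs x hx
      rw [norm_smul, norm_map_ofReal, norm_mul, Complex.norm_exp]
      have h1 : ‖(-(s:ℂ))‖ = s := by
        rw [norm_neg, Complex.norm_real]; exact abs_of_pos hs.1
      have hre : (-x * (s:ℂ)).re = -x.re * s := by simp
      have h2 : Real.exp ((-x * (s:ℂ)).re) ≤ Real.exp ((|z₀.re| + 1) * τs) := by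
        rw [hre]
        apply Real.exp_le_exp.2
        have hb := hball x hx
        nlinarith [hs.1, hs.2, abs_nonneg z₀.re]
      rw [h1]
      calc s * Real.exp ((-x * (s:ℂ)).re) * ‖N s‖
          ≤ τs * Real.exp ((|z₀.re| + 1) * τs) * ‖N s‖ := by
            apply mul_le_mul_of_nonneg_right _ (norm_nonneg _)
            exact mul_le_mul hs.2.le h2 (Real.exp_nonneg _) hτs.le
        _ = _ := rfl)
    (hN.norm.const_mul _)
    (by
      filter_upwards with s x hx
      have h1 : HasDerivAt (fun z : ℂ => Complex.exp (-z * s))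
          (-(s:ℂ) * Complex.exp (-x * s)) x := by
        have h0 : HasDerivAt (fun z : ℂ => -z * (s:ℂ)) (-(s:ℂ)) x := by
          simpa using (hasDerivAt_id x).neg.mul_const (s:ℂ)
        simpa [mul_comm] using h0.cexp
      exact h1.smul_const _)
  exact hd.differentiableAt

lemma det_near_one (n : ℕ) :
    ∃ ε > 0, ∀ X : Matrix (Fin n) (Fin n) ℂ, ‖X - 1‖ < ε → 1/2 ≤ ‖X.det‖ := by
  have hc : ContinuousAt (fun X : Matrix (Fin n) (Fin n) ℂ => X.det) 1 :=
    (continuous_id.matrix_det).continuousAt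
  have hc := Metric.continuousAt_iff.mp hc
  obtain ⟨δ, hδ, h⟩ := hc (1/2) (by norm_num)
  refine ⟨δ, hδ, fun X hX => ?_⟩
  have h1 : dist X 1 < δ := by rwa [dist_eq_norm]
  have h2 := h h1
  rw [dist_eq_norm, Matrix.det_one] at h2
  have h3 := norm_sub_norm_le (1 : ℂ) (1 - X.det)
  have h4 : (1:ℂ) - (1 - X.det) = X.det := by ring
  rw [h4, norm_sub_rev] at h3
  simp only [norm_one] at h3
  linarith

lemma tendsto_far (hτs : 0 < τs) (hN : IntegrableOn N (Set.Ioo 0 τs)) {τ0 : ℝ} (hτ0 : 0 < τ0)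
    (S : ℝ) :
    Tendsto (fun m : ℕ => S * Real.exp (-(τ0 * m))
      + ∫ s in Set.Ioo (0:ℝ) τs, ‖N s‖ * Real.exp (-(m:ℝ) * s)) atTop (𝓝 0) := by
  have h1 : Tendsto (fun m : ℕ => S * Real.exp (-(τ0 * m))) atTop (𝓝 0) := by
    have he : (fun m : ℕ => S * Real.exp (-(τ0 * m))) = fun m : ℕ => S * (Real.exp (-τ0))^m := by
      funext m; rw [← Real.exp_nat_mul]; ring_nf
    rw [he]
    have := tendsto_pow_atTop_nhds_zero_of_lt_one (Real.exp_nonneg (-τ0))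
      (by rw [Real.exp_lt_one_iff]; linarith : Real.exp (-τ0) < 1)
    simpa using this.const_mul S
  have h2 : Tendsto (fun m : ℕ => ∫ s in Set.Ioo (0:ℝ) τs, ‖N s‖ * Real.exp (-(m:ℝ) * s))
      atTop (𝓝 0) := by
    have := tendsto_integral_filter_of_dominated_convergence (μ := volume.restrict (Set.Ioo (0:ℝ) τs))
      (F := fun (m : ℕ) (s : ℝ) => ‖N s‖ * Real.exp (-(m:ℝ) * s)) (f := fun _ => (0:ℝ))
      (bound := fun s => ‖N s‖)
      (Eventually.of_forall fun m =>
        hN.norm.aestronglyMeasurable.mul (Continuous.aestronglyMeasurable (by fun_prop)))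
      (Eventually.of_forall fun m => by
        filter_upwards [ae_restrict_mem measurableSet_Ioo] with s hs
        rw [Real.norm_eq_abs, _root_.abs_of_nonneg (by positivity)]
        calc ‖N s‖ * Real.exp (-(m:ℝ) * s) ≤ ‖N s‖ * 1 := by
              apply mul_le_mul_of_nonneg_left _ (norm_nonneg _)
              rw [Real.exp_le_one_iff]
              nlinarith [hs.1]
          _ = ‖N s‖ := mul_one _)
      hN.norm
      (by
        filter_upwards [ae_restrict_mem measurableSet_Ioo] with s hs
        have he : (fun m : ℕ => ‖N s‖ * Real.exp (-(m:ℝ) * s))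
            = fun m : ℕ => ‖N s‖ * (Real.exp (-s))^m := by
          funext m; rw [← Real.exp_nat_mul]; ring_nf
        rw [he]
        have := tendsto_pow_atTop_nhds_zero_of_lt_one (Real.exp_nonneg (-s))
          (by rw [Real.exp_lt_one_iff]; linarith [hs.1] : Real.exp (-s) < 1)
        simpa using this.const_mul ‖N s‖)
    simpa using this
  simpa using h1.add h2

lemma RR_tendsto_cocompact (hτs : 0 < τs) (hN : IntegrableOn N (Set.Ioo 0 τs)) (w : ℂ) :
    Tendsto (fun y : ℝ => ∫ s in Set.Ioo (0:ℝ) τs,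
        Complex.exp (-(w + y * Complex.I) * s) • (N s).map Complex.ofReal)
      (cocompact ℝ) (𝓝 0) := by
  set h : ℝ → Matrix (Fin n) (Fin n) ℂ :=
    (Set.Ioo (0:ℝ) τs).indicator
      (fun s => Complex.exp (-w * s) • (N s).map Complex.ofReal) with hh
  have hint : @Integrable (Matrix (Fin n) (Fin n) ℂ) _ SeminormedAddGroup.toContinuousENorm ℝ _ h volume :=
    IntegrableOn.integrable_indicator (by exact integrableOn_exp_smul hN w) measurableSet_Ioo
  have hRL := Real.tendsto_integral_exp_smul_cocompact h
  have hmap : Tendsto (fun y : ℝ => y / (2 * Real.pi)) (cocompact ℝ) (cocompact ℝ) := by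
    have h1 : Tendsto (fun y : ℝ => ‖y / (2 * Real.pi)‖) (cocompact ℝ) atTop := by
      have hsrc : Tendsto (fun y : ℝ => ‖y‖) (cocompact ℝ) atTop := tendsto_norm_cocompact_atTop
      refine (Tendsto.atTop_div_const (by positivity : (0:ℝ) < 2 * Real.pi) hsrc).congr
        fun y => ?_
      rw [norm_div, Real.norm_eq_abs (2 * Real.pi), _root_.abs_of_pos (by positivity)]
    have h2 := tendsto_norm_atTop_iff_cobounded.mp h1
    rwa [Metric.cobounded_eq_cocompact] at h2
  have key : ∀ y : ℝ, (∫ v : ℝ, Real.fourierChar (-(v * (y / (2 * Real.pi)))) • h v)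
      = ∫ s in Set.Ioo (0:ℝ) τs,
          Complex.exp (-(w + y * Complex.I) * s) • (N s).map Complex.ofReal := by
    intro y
    rw [← integral_indicator measurableSet_Ioo]
    congr 1
    funext v
    by_cases hv : v ∈ Set.Ioo (0:ℝ) τs
    · rw [hh, Set.indicator_of_mem hv, Set.indicator_of_mem hv, Circle.smul_def,
        Real.fourierChar_apply, smul_smul, ← Complex.exp_add]
      congr 2
      push_cast
      have hπ : (Real.pi : ℂ) ≠ 0 := Complex.ofReal_ne_zero.2 Real.pi_ne_zero
      field_simp
      ring
    · rw [hh, Set.indicator_of_notMem hv, Set.indicator_of_notMem hv, smul_zero]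
  exact Tendsto.congr (fun y => key y) (hRL.comp hmap)

lemma RR_lipschitz (hτs : 0 < τs) (hN : IntegrableOn N (Set.Ioo 0 τs)) {ν₀ : ℝ}
    (hν₀ : 0 < ν₀) {u u' : ℂ} (hu : -ν₀ ≤ u.re) (hu' : -ν₀ ≤ u'.re)
    (hclose : ‖(u - u')‖ * τs ≤ 1) :
    ‖(∫ s in Set.Ioo (0:ℝ) τs, Complex.exp (-u * s) • (N s).map Complex.ofReal)
      - ∫ s in Set.Ioo (0:ℝ) τs, Complex.exp (-u' * s) • (N s).map Complex.ofReal‖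
      ≤ (2 * τs * Real.exp (ν₀ * τs) * ∫ s in Set.Ioo (0:ℝ) τs, ‖N s‖)
          * ‖(u - u')‖ := by
  rw [← integral_sub (integrableOn_exp_smul hN u) (integrableOn_exp_smul hN u')]
  refine le_trans (norm_integral_le_integral_norm _) ?_
  have hpt : ∀ s ∈ Set.Ioo (0:ℝ) τs,
      ‖Complex.exp (-u * s) • (N s).map Complex.ofReal
        - Complex.exp (-u' * s) • (N s).map Complex.ofReal‖
      ≤ (2 * τs * Real.exp (ν₀ * τs) * ‖(u - u')‖) * ‖N s‖ := by
    intro s hs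
    rw [← sub_smul, norm_smul, norm_map_ofReal]
    have hfac : Complex.exp (-u * s) - Complex.exp (-u' * s)
        = Complex.exp (-u' * s) * (Complex.exp ((u' - u) * s) - 1) := by
      rw [mul_sub, mul_one, ← Complex.exp_add]
      ring_nf
    rw [hfac, norm_mul]
    have h1 : ‖(Complex.exp (-u' * s))‖ ≤ Real.exp (ν₀ * τs) := by
      rw [Complex.norm_exp]
      apply Real.exp_le_exp.2
      have hre : (-u' * (s:ℂ)).re = -u'.re * s := by simp
      rw [hre]
      nlinarith [hs.1, hs.2]
    have habs : ‖((u' - u) * s)‖ = ‖(u - u')‖ * s := by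
      rw [norm_mul, Complex.norm_real, Real.norm_eq_abs, _root_.abs_of_pos hs.1,
        norm_sub_rev u' u]
    have hle1 : ‖((u' - u) * s)‖ ≤ 1 := by
      rw [habs]
      nlinarith [norm_nonneg (u - u'), hs.2, hs.1, hclose]
    have h2 : ‖(Complex.exp ((u' - u) * s) - 1)‖ ≤ 2 * (‖(u - u')‖ * s) := by
      have := Complex.norm_exp_sub_one_le hle1
      rwa [habs] at this
    calc ‖(Complex.exp (-u' * s))‖ * ‖(Complex.exp ((u' - u) * s) - 1)‖ * ‖N s‖
        ≤ Real.exp (ν₀ * τs) * (2 * (‖(u - u')‖ * s)) * ‖N s‖ := by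
          apply mul_le_mul_of_nonneg_right _ (norm_nonneg _)
          exact mul_le_mul h1 h2 (norm_nonneg _) (Real.exp_nonneg _)
      _ ≤ Real.exp (ν₀ * τs) * (2 * (‖(u - u')‖ * τs)) * ‖N s‖ := by
          apply mul_le_mul_of_nonneg_right _ (norm_nonneg _)
          apply mul_le_mul_of_nonneg_left _ (Real.exp_nonneg _)
          nlinarith [norm_nonneg (u - u'), hs.2, hs.1]
      _ = (2 * τs * Real.exp (ν₀ * τs) * ‖(u - u')‖) * ‖N s‖ := by ring
  calc (∫ s in Set.Ioo (0:ℝ) τs, ‖Complex.exp (-u * s) • (N s).map Complex.ofReal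
          - Complex.exp (-u' * s) • (N s).map Complex.ofReal‖)
      ≤ ∫ s in Set.Ioo (0:ℝ) τs,
          (2 * τs * Real.exp (ν₀ * τs) * ‖(u - u')‖) * ‖N s‖ := by
        refine setIntegral_mono_on
          (((integrableOn_exp_smul hN u).sub (integrableOn_exp_smul hN u')).norm)
          (hN.norm.const_mul _) measurableSet_Ioo hpt
    _ = (2 * τs * Real.exp (ν₀ * τs) * ∫ s in Set.Ioo (0:ℝ) τs, ‖N s‖)
          * ‖(u - u')‖ := by
        rw [integral_const_mul]; ring

end DetCharAux

open DetCharAux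

set_option maxHeartbeats 2000000

/-- if all zeros of `det Δ` lie in `{Re z < -ν₀}`, then for every
`0 < ν < ν₀` the infimum of `|det Δ(z)|` over `{Re z ≥ -ν}` is strictly positive. -/
theorem det_char_matrix_inf_pos_on_half_plane
    (n : ℕ) (hn : 1 ≤ n) (τs : ℝ) (hτs : 0 < τs)
    (A : ℕ → Matrix (Fin n) (Fin n) ℝ) (hA : Summable fun k => ‖A k‖)
    (τ : ℕ → ℝ) (hτmono : StrictMono τ) (hτ : ∀ k, τ k ∈ Set.Ioc 0 τs)
    (N : ℝ → Matrix (Fin n) (Fin n) ℝ) (hN : @IntegrableOn ℝ _ _ _ SeminormedAddGroup.toContinuousENorm N (Set.Ioo 0 τs) volume)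
    (Δ : ℂ → Matrix (Fin n) (Fin n) ℂ)
    (hΔ : ∀ z : ℂ, Δ z =
      1 + (∑' k : ℕ, Complex.exp (-(τ k : ℂ) * z) • (A k).map Complex.ofReal)
        + ∫ s in Set.Ioo (0:ℝ) τs, Complex.exp (-z * s) • (N s).map Complex.ofReal)
    (ν₀ : ℝ) (hν₀ : 0 < ν₀)
    (hroots : ∀ z : ℂ, (Δ z).det = 0 → z.re < -ν₀) :
    ∀ ν : ℝ, 0 < ν → ν < ν₀ →
      0 < ⨅ z : {z : ℂ // -ν ≤ z.re}, ‖(Δ (z : ℂ)).det‖ := by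
  intro ν hν hνν₀
  by_contra hcon
  push_neg at hcon
  set F : ℂ → ℂ := fun z => (Δ z).det with hF
  have hτ0 : 0 < τ 0 := (hτ 0).1
  set S : ℝ := ∑' k, ‖A k‖ with hS
  have hS0 : 0 ≤ S := tsum_nonneg fun k => norm_nonneg _
  have hsum : ∀ (d : ℕ → ℂ), (∀ k, ‖d k‖ ≤ 1) → ∀ z, Summable fun k => d k • Eterm A τ k z :=
    fun d hd z => summable_dE hA hτ hd z
  set R : ℂ → Matrix (Fin n) (Fin n) ℂ :=
    fun z => ∫ s in Set.Ioo (0:ℝ) τs, Complex.exp (-z * s) • (N s).map Complex.ofReal with hR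
  have hΔ' : ∀ z, Δ z = 1 + (∑' k, Eterm A τ k z) + R z := fun z => hΔ z
  have hTdiff : ∀ (d : ℕ → ℂ), (∀ k, ‖d k‖ ≤ 1) →
      Differentiable ℂ (fun z => ∑' k, d k • Eterm A τ k z) :=
    fun d hd => differentiable_TT hA hτ hd (hsum d hd)
  have hRdiff : Differentiable ℂ R := differentiable_RR hτs hN
  have hΔdiff : Differentiable ℂ Δ := by
    have h1 : Differentiable ℂ (fun z => ∑' k, Eterm A τ k z) := by
      have h2 := hTdiff (fun _ => 1) (fun k => by norm_num)
      simpa only [one_smul] using h2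
    have h3 : Differentiable ℂ (fun z => 1 + (∑' k, Eterm A τ k z) + R z) :=
      ((differentiable_const _).add h1).add hRdiff
    have h4 : Δ = fun z => 1 + (∑' k, Eterm A τ k z) + R z := funext hΔ'
    rw [h4]
    exact h3
  have hFdiff : Differentiable ℂ F := differentiable_det hΔdiff
  have hFcont : Continuous F := hFdiff.continuous
  -- the infimum is 0; extract a minimizing sequence
  haveI hne : Nonempty {z : ℂ // -ν ≤ z.re} := ⟨⟨0, by simpa using hν.le⟩⟩
  have hinf0 : ⨅ z : {z : ℂ // -ν ≤ z.re}, ‖F (z : ℂ)‖ = 0 :=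
    le_antisymm hcon (le_ciInf fun z => norm_nonneg _)
  have hex : ∀ m : ℕ, ∃ w : {z : ℂ // -ν ≤ z.re}, ‖F (w : ℂ)‖ < 1 / (2 * (m + 1)) := by
    intro m
    apply exists_lt_of_ciInf_lt
    rw [hinf0]
    positivity
  choose zs hzs using hex
  have hF0 : Tendsto (fun m => ‖F (zs m : ℂ)‖) atTop (𝓝 0) := by
    refine squeeze_zero (fun m => norm_nonneg _) (fun m => (hzs m).le) ?_
    have h1 : Tendsto (fun m : ℕ => (1:ℝ)/(m+1)) atTop (𝓝 0) :=
      tendsto_one_div_add_atTop_nhds_zero_nat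
    have h2 := h1.const_mul (1/2 : ℝ)
    simp only [mul_zero] at h2
    refine h2.congr fun m => ?_
    field_simp
  -- far-field lower bound
  obtain ⟨ε₁, hε₁, hdet1⟩ := det_near_one n
  obtain ⟨m₀, hm₀⟩ : ∃ m₀ : ℕ, S * Real.exp (-(τ 0 * m₀))
      + (∫ s in Set.Ioo (0:ℝ) τs, ‖N s‖ * Real.exp (-(m₀:ℝ) * s)) < ε₁ :=
    ((tendsto_far hτs hN hτ0 S).eventually_lt_const hε₁).exists
  set M : ℝ := (m₀ : ℝ) with hM
  have hM0 : 0 ≤ M := Nat.cast_nonneg m₀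
  have hTT_far : ∀ (d : ℕ → ℂ), (∀ k, ‖d k‖ ≤ 1) → ∀ z : ℂ, M ≤ z.re →
      ‖∑' k, d k • Eterm A τ k z‖ ≤ S * Real.exp (-(τ 0 * M)) := by
    intro d hd z hz
    have h1 : ∀ k, ‖d k • Eterm A τ k z‖ ≤ ‖A k‖ * Real.exp (-(τ 0 * M)) := fun k => by
      rw [norm_smul]
      calc ‖d k‖ * ‖Eterm A τ k z‖ ≤ 1 * ‖Eterm A τ k z‖ :=
            mul_le_mul_of_nonneg_right (hd k) (norm_nonneg _)
        _ = ‖Eterm A τ k z‖ := one_mul _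
        _ ≤ _ := norm_Eterm_far hτ hτmono hM0 hz k
    have hsn : Summable fun k => ‖d k • Eterm A τ k z‖ :=
      Summable.of_nonneg_of_le (fun k => norm_nonneg _) h1 (hA.mul_right _)
    calc ‖∑' k, d k • Eterm A τ k z‖ ≤ ∑' k, ‖d k • Eterm A τ k z‖ :=
          norm_tsum_le_tsum_norm hsn
      _ ≤ ∑' k, ‖A k‖ * Real.exp (-(τ 0 * M)) := Summable.tsum_le_tsum h1 hsn (hA.mul_right _)
      _ = S * Real.exp (-(τ 0 * M)) := tsum_mul_right
  have hR_far : ∀ z : ℂ, M ≤ z.re →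
      ‖R z‖ ≤ ∫ s in Set.Ioo (0:ℝ) τs, ‖N s‖ * Real.exp (-(m₀:ℝ) * s) := by
    intro z hz
    refine le_trans (norm_integral_le_integral_norm _) ?_
    refine setIntegral_mono_on ((integrableOn_exp_smul hN z).norm) ?_ measurableSet_Ioo ?_
    · refine Integrable.mono' hN.norm
        (hN.norm.aestronglyMeasurable.mul (Continuous.aestronglyMeasurable (by fun_prop))) ?_
      filter_upwards [ae_restrict_mem measurableSet_Ioo] with s hs
      rw [Real.norm_eq_abs, _root_.abs_of_nonneg (by positivity)]
      calc ‖N s‖ * Real.exp (-(m₀:ℝ) * s) ≤ ‖N s‖ * 1 := by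
            apply mul_le_mul_of_nonneg_left _ (norm_nonneg _)
            rw [Real.exp_le_one_iff]
            nlinarith [hs.1, hM0]
        _ = ‖N s‖ := mul_one _
    · intro s hs
      rw [norm_smul, norm_map_ofReal, Complex.norm_exp]
      have hre : (-z * (s:ℂ)).re = -z.re * s := by simp
      rw [hre, mul_comm ‖N s‖ _]
      apply mul_le_mul_of_nonneg_right _ (norm_nonneg _)
      apply Real.exp_le_exp.2
      have : -z.re ≤ -(m₀:ℝ) := by rw [hM] at hz; linarith
      nlinarith [hs.1]
  have hfarΔ : ∀ z : ℂ, M ≤ z.re → 1/2 ≤ ‖F z‖ := by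
    intro z hz
    apply hdet1
    rw [hΔ' z]
    have h1 : (1 + (∑' k, Eterm A τ k z) + R z) - 1 = (∑' k, Eterm A τ k z) + R z := by abel
    rw [h1]
    have h2 := hTT_far (fun _ => 1) (fun k => by norm_num) z hz
    simp only [one_smul] at h2
    calc ‖(∑' k, Eterm A τ k z) + R z‖ ≤ ‖∑' k, Eterm A τ k z‖ + ‖R z‖ := norm_add_le _ _
      _ ≤ S * Real.exp (-(τ 0 * M)) + ∫ s in Set.Ioo (0:ℝ) τs, ‖N s‖ * Real.exp (-(m₀:ℝ) * s) :=
          add_le_add h2 (hR_far z hz)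
      _ < ε₁ := hm₀
  have hRnn : (0:ℝ) ≤ ∫ s in Set.Ioo (0:ℝ) τs, ‖N s‖ * Real.exp (-(m₀:ℝ) * s) :=
    integral_nonneg fun s => by positivity
  have hfarQ : ∀ (d : ℕ → ℂ), (∀ k, ‖d k‖ ≤ 1) → ∀ z : ℂ, M ≤ z.re →
      1/2 ≤ ‖(1 + ∑' k, d k • Eterm A τ k z : Matrix (Fin n) (Fin n) ℂ).det‖ := by
    intro d hd z hz
    apply hdet1
    have h1 : (1 + ∑' k, d k • Eterm A τ k z : Matrix (Fin n) (Fin n) ℂ) - 1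
        = ∑' k, d k • Eterm A τ k z := by abel
    rw [h1]
    have h2 := hTT_far d hd z hz
    calc ‖∑' k, d k • Eterm A τ k z‖ ≤ S * Real.exp (-(τ 0 * M)) := h2
      _ < ε₁ := by linarith [hm₀]
  have hzsre : ∀ m, (zs m : ℂ).re < M := by
    intro m
    by_contra h
    push_neg at h
    have h2 := hfarΔ _ h
    have h3 := hzs m
    have h4 : (1:ℝ)/(2*(m+1)) ≤ 1/2 := by
      rw [div_le_div_iff₀ (by positivity) (by norm_num)]
      nlinarith [Nat.cast_nonneg (α := ℝ) m]
    linarith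
  by_cases hbd : ∀ B : ℝ, ∀ᶠ m in atTop, B ≤ ‖(zs m : ℂ)‖
  · -- |zs| → ∞ : the hard case
    have hnorm : Tendsto (fun m => ‖(zs m : ℂ)‖) atTop atTop := tendsto_atTop.2 hbd
    have hxmem : ∀ m, (zs m : ℂ).re ∈ Set.Icc (-ν) M := fun m => ⟨(zs m).2, (hzsre m).le⟩
    obtain ⟨xbar, hxbarmem, φ₁, hφ₁mono, hxlim₁⟩ := isCompact_Icc.tendsto_subseq hxmem
    set D : ℕ → ℕ → ℂ := fun m k =>
      Complex.exp (-(τ k : ℂ) * ((zs m : ℂ).im : ℂ) * Complex.I) with hD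
    have hDmem : ∀ m, D m ∈ Set.pi Set.univ (fun _ : ℕ => Metric.closedBall (0:ℂ) 1) := by
      intro m k _
      rw [Metric.mem_closedBall, dist_zero_right, hD, Complex.norm_exp]
      have h1 : (-(τ k:ℂ) * ((zs m:ℂ).im:ℂ) * Complex.I).re = 0 := by simp
      rw [h1, Real.exp_zero]
    have hcomp : IsCompact (Set.pi Set.univ fun _ : ℕ => Metric.closedBall (0:ℂ) 1) :=
      isCompact_univ_pi fun _ => isCompact_closedBall _ _
    obtain ⟨c, hcmem, φ₂, hφ₂mono, hclim⟩ := hcomp.tendsto_subseq (fun j => hDmem (φ₁ j))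
    set ψ : ℕ → ℕ := φ₁ ∘ φ₂ with hψ
    have hψmono : StrictMono ψ := hφ₁mono.comp hφ₂mono
    set y : ℕ → ℝ := fun j => (zs (ψ j) : ℂ).im with hy
    set xs : ℕ → ℝ := fun j => (zs (ψ j) : ℂ).re with hxs
    have hxlim : Tendsto xs atTop (𝓝 xbar) := hxlim₁.comp hφ₂mono.tendsto_atTop
    have hDnorm : ∀ m k, ‖D m k‖ ≤ 1 := fun m k => by
      have := hDmem m k (Set.mem_univ k)
      rwa [Metric.mem_closedBall, dist_zero_right] at this
    have hc : ∀ k, ‖c k‖ ≤ 1 := fun k => by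
      have := hcmem k (Set.mem_univ k)
      rwa [Metric.mem_closedBall, dist_zero_right] at this
    have hDlim : ∀ k, Tendsto (fun j => D (ψ j) k) atTop (𝓝 (c k)) :=
      fun k => (tendsto_pi_nhds.mp hclim) k
    have hyco : Tendsto y atTop (cocompact ℝ) := by
      have h1 : Tendsto (fun j => ‖(zs (ψ j) : ℂ)‖) atTop atTop :=
        hnorm.comp hψmono.tendsto_atTop
      have h2 : Tendsto (fun j => ‖(zs (ψ j):ℂ)‖ - (ν + M)) atTop atTop :=
        tendsto_atTop_add_const_right _ _ h1
      have h3 : Tendsto (fun j => |y j|) atTop atTop := by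
        refine tendsto_atTop_mono (fun j => ?_) h2
        have h4 := Complex.norm_le_abs_re_add_abs_im (zs (ψ j) : ℂ)
        have h5 : |(zs (ψ j):ℂ).re| ≤ ν + M := by
          rw [abs_le]
          constructor
          · have := (hxmem (ψ j)).1; linarith [hM0, hν.le]
          · have := (hxmem (ψ j)).2; linarith [hν.le]
        have h6 : |y j| = |(zs (ψ j):ℂ).im| := rfl
        rw [h6]
        linarith
      have h4 : Tendsto (fun j => ‖y j‖) atTop atTop := by
        simpa only [Real.norm_eq_abs] using h3
      have h5 := tendsto_norm_atTop_iff_cobounded.mp h4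
      rwa [Metric.cobounded_eq_cocompact] at h5
    -- geometry
    set r : ℝ := (ν₀ - ν)/2 with hr
    have hrpos : 0 < r := by rw [hr]; linarith
    set xbarc : ℂ := (xbar : ℂ) with hxbarc
    set K : Set ℂ := Metric.closedBall xbarc r with hK
    have hKre : ∀ z ∈ K, -ν - r ≤ z.re := by
      intro z hz
      have h1 : |(z - xbarc).re| ≤ ‖(z - xbarc)‖ := Complex.abs_re_le_norm _
      have h2 : ‖(z - xbarc)‖ ≤ r := by rwa [hK, Metric.mem_closedBall, Complex.dist_eq] at hz
      have h3 : (z - xbarc).re = z.re - xbar := by simp [hxbarc]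
      have h4 : -ν ≤ xbar := hxbarmem.1
      rw [h3] at h1
      have h5 := (abs_le.mp (h1.trans h2)).1
      linarith
    have hKν₀ : ∀ z ∈ K, -ν₀ ≤ z.re := by
      intro z hz
      have h1 := hKre z hz
      rw [hr] at h1
      linarith
    set Cb : ℝ := Real.exp (τs * ν₀) with hCb
    have hCb0 : 0 < Cb := Real.exp_pos _
    set Q : ℂ → Matrix (Fin n) (Fin n) ℂ := fun z => 1 + ∑' k, c k • Eterm A τ k z with hQ
    have hQdiff : Differentiable ℂ Q := (differentiable_const _).add (hTdiff c hc)
    set g : ℂ → ℂ := fun z => (Q z).det with hg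
    have hgdiff : Differentiable ℂ g := differentiable_det hQdiff
    have hgcont : Continuous g := hgdiff.continuous
    -- translation identity
    have htrans : ∀ (j : ℕ) (z : ℂ), Δ (z + (y j : ℂ) * Complex.I)
        = 1 + (∑' k, D (ψ j) k • Eterm A τ k z) + R (z + (y j : ℂ) * Complex.I) := by
      intro j z
      rw [hΔ' (z + (y j : ℂ) * Complex.I)]
      congr 2
      apply tsum_congr
      intro k
      rw [Eterm, Eterm, hD, smul_smul, ← Complex.exp_add]
      congr 2
      ring
    -- uniform smallness of series difference
    have hTTconv : Tendsto (fun j => ∑' k, ‖D (ψ j) k - c k‖ * (‖A k‖ * Cb)) atTop (𝓝 0) := by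
      have h0 := tendsto_tsum_of_dominated_convergence (𝓕 := atTop)
        (f := fun j k => ‖D (ψ j) k - c k‖ * (‖A k‖ * Cb)) (g := fun _ => (0:ℝ))
        (bound := fun k => 2 * (‖A k‖ * Cb))
        ((hA.mul_right Cb).mul_left 2)
        (fun k => by
          have h1 : Tendsto (fun j => D (ψ j) k - c k) atTop (𝓝 0) := by
            have h0 := (hDlim k).sub (tendsto_const_nhds (x := c k) (f := atTop))
            simpa using h0
          have h2 : Tendsto (fun j => ‖D (ψ j) k - c k‖) atTop (𝓝 0) := by
            simpa using h1.norm
          simpa using h2.mul_const (‖A k‖ * Cb))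
        (Eventually.of_forall fun j k => by
          rw [Real.norm_eq_abs, _root_.abs_of_nonneg (by positivity)]
          apply mul_le_mul_of_nonneg_right _ (by positivity)
          calc ‖D (ψ j) k - c k‖ ≤ ‖D (ψ j) k‖ + ‖c k‖ := norm_sub_le _ _
            _ ≤ 1 + 1 := add_le_add (hDnorm (ψ j) k) (hc k)
            _ = 2 := by norm_num)
      simpa using h0
    have hTTbound : ∀ j, ∀ z ∈ K,
        ‖(∑' k, D (ψ j) k • Eterm A τ k z) - ∑' k, c k • Eterm A τ k z‖
        ≤ ∑' k, ‖D (ψ j) k - c k‖ * (‖A k‖ * Cb) := by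
      intro j z hz
      have hEz : ∀ k, ‖Eterm A τ k z‖ ≤ ‖A k‖ * Cb := fun k =>
        norm_Eterm hτ hν₀.le (hKν₀ z hz) k
      have hptb : ∀ k, ‖D (ψ j) k • Eterm A τ k z - c k • Eterm A τ k z‖
          ≤ ‖D (ψ j) k - c k‖ * (‖A k‖ * Cb) := fun k => by
        rw [← sub_smul, norm_smul]
        exact mul_le_mul_of_nonneg_left (hEz k) (norm_nonneg _)
      have hsn : Summable fun k => ‖D (ψ j) k • Eterm A τ k z - c k • Eterm A τ k z‖ := by
        refine Summable.of_nonneg_of_le (fun k => norm_nonneg _) hptb ?_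
        refine Summable.of_nonneg_of_le (fun k => by positivity) (fun k => ?_)
          ((hA.mul_right Cb).mul_left 2)
        apply mul_le_mul_of_nonneg_right _ (by positivity)
        calc ‖D (ψ j) k - c k‖ ≤ ‖D (ψ j) k‖ + ‖c k‖ := norm_sub_le _ _
          _ ≤ 1 + 1 := add_le_add (hDnorm (ψ j) k) (hc k)
          _ = 2 := by norm_num
      have hsn2 : Summable fun k => ‖D (ψ j) k - c k‖ * (‖A k‖ * Cb) := by
        refine Summable.of_nonneg_of_le (fun k => by positivity) (fun k => ?_)
          ((hA.mul_right Cb).mul_left 2)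
        apply mul_le_mul_of_nonneg_right _ (by positivity)
        calc ‖D (ψ j) k - c k‖ ≤ ‖D (ψ j) k‖ + ‖c k‖ := norm_sub_le _ _
          _ ≤ 1 + 1 := add_le_add (hDnorm (ψ j) k) (hc k)
          _ = 2 := by norm_num
      rw [← Summable.tsum_sub (hsum _ (hDnorm (ψ j)) z) (hsum c hc z)]
      calc ‖∑' k, (D (ψ j) k • Eterm A τ k z - c k • Eterm A τ k z)‖
          ≤ ∑' k, ‖D (ψ j) k • Eterm A τ k z - c k • Eterm A τ k z‖ :=
            norm_tsum_le_tsum_norm hsn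
        _ ≤ ∑' k, ‖D (ψ j) k - c k‖ * (‖A k‖ * Cb) := Summable.tsum_le_tsum hptb hsn hsn2
    -- uniform smallness of the integral term, via a finite net
    have hRRunif : ∀ ε : ℝ, 0 < ε →
        ∀ᶠ j in atTop, ∀ z ∈ K, ‖R (z + (y j:ℂ) * Complex.I)‖ ≤ ε := by
      intro ε hε
      set L : ℝ := 2 * τs * Real.exp (ν₀ * τs) * ∫ s in Set.Ioo (0:ℝ) τs, ‖N s‖ with hL
      have hL0 : 0 ≤ L := by
        have : (0:ℝ) ≤ ∫ s in Set.Ioo (0:ℝ) τs, ‖N s‖ := integral_nonneg fun s => norm_nonneg _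
        rw [hL]; positivity
      set δ : ℝ := min (1/(τs+1)) (ε/(2*(L+1))) with hδ
      have hδpos : 0 < δ := lt_min (by positivity) (by positivity)
      have hcov : K ⊆ ⋃ w : K, Metric.ball (w:ℂ) δ := fun z hz =>
        Set.mem_iUnion.2 ⟨⟨z, hz⟩, Metric.mem_ball_self hδpos⟩
      obtain ⟨t, ht⟩ := (isCompact_closedBall xbarc r).elim_finite_subcover
        (fun w : K => Metric.ball (w:ℂ) δ) (fun w => Metric.isOpen_ball) hcov
      have hev : ∀ᶠ j in atTop, ∀ w ∈ t, ‖R ((w:ℂ) + (y j:ℂ) * Complex.I)‖ < ε/2 := by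
        rw [Filter.eventually_all_finset]
        intro w _
        have hpt := (RR_tendsto_cocompact hτs hN (w:ℂ)).comp hyco
        have h1 := Metric.tendsto_nhds.mp hpt (ε/2) (by positivity)
        filter_upwards [h1] with j hj
        rw [dist_zero_right] at hj
        exact hj
      filter_upwards [hev] with j hj z hz
      obtain ⟨w, hwt, hzw⟩ := Set.mem_iUnion₂.mp (ht hz)
      have hd1 : ‖(z - (w:ℂ))‖ < δ := by
        rwa [Metric.mem_ball, Complex.dist_eq] at hzw
      have hwK : (w:ℂ) ∈ K := w.2
      have hzre : -ν₀ ≤ (z + (y j:ℂ) * Complex.I).re := by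
        have h2 : (z + (y j:ℂ) * Complex.I).re = z.re := by simp
        rw [h2]; exact hKν₀ z hz
      have hwre : -ν₀ ≤ ((w:ℂ) + (y j:ℂ) * Complex.I).re := by
        have h2 : ((w:ℂ) + (y j:ℂ) * Complex.I).re = (w:ℂ).re := by simp
        rw [h2]; exact hKν₀ _ hwK
      have hsub : (z + (y j:ℂ) * Complex.I) - ((w:ℂ) + (y j:ℂ) * Complex.I) = z - (w:ℂ) := by
        ring
      have hclose : ‖((z + (y j:ℂ) * Complex.I) - ((w:ℂ) + (y j:ℂ) * Complex.I))‖ * τs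
          ≤ 1 := by
        rw [hsub]
        have hδ1 : δ ≤ 1/(τs+1) := min_le_left _ _
        have : ‖(z - (w:ℂ))‖ * τs ≤ (1/(τs+1)) * τs := by
          apply mul_le_mul_of_nonneg_right _ hτs.le
          linarith
        have h9 : (1/(τs+1)) * τs ≤ 1 := by
          rw [div_mul_eq_mul_div, div_le_one (by linarith)]
          linarith
        linarith
      have hlip := RR_lipschitz hτs hN hν₀ hzre hwre hclose
      rw [hsub] at hlip
      have hLδ : L * ‖(z - (w:ℂ))‖ ≤ ε/2 := by
        have hδ2 : δ ≤ ε/(2*(L+1)) := min_le_right _ _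
        have h10 : L * ‖(z - (w:ℂ))‖ ≤ L * δ :=
          mul_le_mul_of_nonneg_left hd1.le hL0
        have h11 : L * δ ≤ L * (ε/(2*(L+1))) := mul_le_mul_of_nonneg_left hδ2 hL0
        have h12 : L * (ε/(2*(L+1))) ≤ ε/2 := by
          rw [mul_div_assoc']
          rw [div_le_div_iff₀ (by positivity) (by norm_num)]
          nlinarith
        linarith
      calc ‖R (z + (y j:ℂ) * Complex.I)‖
          ≤ ‖R (z + (y j:ℂ) * Complex.I) - R ((w:ℂ) + (y j:ℂ) * Complex.I)‖
            + ‖R ((w:ℂ) + (y j:ℂ) * Complex.I)‖ := by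
            have := norm_add_le (R (z + (y j:ℂ) * Complex.I) - R ((w:ℂ) + (y j:ℂ) * Complex.I))
              (R ((w:ℂ) + (y j:ℂ) * Complex.I))
            simpa using this
        _ ≤ L * ‖(z - (w:ℂ))‖ + ε/2 := add_le_add hlip (hj w hwt).le
        _ ≤ ε/2 + ε/2 := add_le_add hLδ le_rfl
        _ = ε := by ring
    -- uniform convergence of the translated matrices on K
    have hUnif : ∀ ε : ℝ, 0 < ε →
        ∀ᶠ j in atTop, ∀ z ∈ K, ‖Δ (z + (y j:ℂ) * Complex.I) - Q z‖ ≤ ε := by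
      intro ε hε
      have h1 : ∀ᶠ j in atTop, (∑' k, ‖D (ψ j) k - c k‖ * (‖A k‖ * Cb)) < ε/2 :=
        hTTconv.eventually_lt_const (by positivity)
      have h2 := hRRunif (ε/2) (by positivity)
      filter_upwards [h1, h2] with j hj1 hj2 z hz
      rw [htrans j z]
      have h3 : 1 + (∑' k, D (ψ j) k • Eterm A τ k z) + R (z + (y j:ℂ) * Complex.I) - Q z
          = ((∑' k, D (ψ j) k • Eterm A τ k z) - ∑' k, c k • Eterm A τ k z)
            + R (z + (y j:ℂ) * Complex.I) := by
        simp only [hQ]; abel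
      rw [h3]
      calc ‖((∑' k, D (ψ j) k • Eterm A τ k z) - ∑' k, c k • Eterm A τ k z)
            + R (z + (y j:ℂ) * Complex.I)‖
          ≤ ‖(∑' k, D (ψ j) k • Eterm A τ k z) - ∑' k, c k • Eterm A τ k z‖
            + ‖R (z + (y j:ℂ) * Complex.I)‖ := norm_add_le _ _
        _ ≤ ε/2 + ε/2 := add_le_add ((hTTbound j z hz).trans hj1.le) (hj2 z hz)
        _ = ε := by ring
    -- uniform continuity of det on a bounded set
    haveI : ProperSpace (Matrix (Fin n) (Fin n) ℂ) := FiniteDimensional.proper ℂ _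
    set B₀ : ℝ := ‖(1 : Matrix (Fin n) (Fin n) ℂ)‖ + S * Cb with hB₀
    have hQbound : ∀ z ∈ K, ‖Q z‖ ≤ B₀ := by
      intro z hz
      rw [hQ, hB₀]
      have h1 : ∀ k, ‖c k • Eterm A τ k z‖ ≤ ‖A k‖ * Cb := fun k => by
        rw [norm_smul]
        calc ‖c k‖ * ‖Eterm A τ k z‖ ≤ 1 * ‖Eterm A τ k z‖ :=
              mul_le_mul_of_nonneg_right (hc k) (norm_nonneg _)
          _ = ‖Eterm A τ k z‖ := one_mul _
          _ ≤ _ := norm_Eterm hτ hν₀.le (hKν₀ z hz) k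
      have hsn : Summable fun k => ‖c k • Eterm A τ k z‖ :=
        Summable.of_nonneg_of_le (fun k => norm_nonneg _) h1 (hA.mul_right _)
      calc ‖(1 : Matrix (Fin n) (Fin n) ℂ) + ∑' k, c k • Eterm A τ k z‖
          ≤ ‖(1 : Matrix (Fin n) (Fin n) ℂ)‖ + ‖∑' k, c k • Eterm A τ k z‖ := norm_add_le _ _
        _ ≤ ‖(1 : Matrix (Fin n) (Fin n) ℂ)‖ + S * Cb := by
            have h2 : ‖∑' k, c k • Eterm A τ k z‖ ≤ S * Cb := by
              calc ‖∑' k, c k • Eterm A τ k z‖ ≤ ∑' k, ‖c k • Eterm A τ k z‖ :=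
                    norm_tsum_le_tsum_norm hsn
                _ ≤ ∑' k, ‖A k‖ * Cb := Summable.tsum_le_tsum h1 hsn (hA.mul_right _)
                _ = S * Cb := tsum_mul_right
            linarith
    have hdetUC := (isCompact_closedBall (0 : Matrix (Fin n) (Fin n) ℂ)
      (B₀ + 1)).uniformContinuousOn_of_continuous
      (continuous_id.matrix_det.continuousOn)
    have hdetUC := Metric.uniformContinuousOn_iff.mp hdetUC
    have hdetclose : ∀ ε : ℝ, 0 < ε → ∀ᶠ j in atTop, ∀ z ∈ K,
        dist ((Δ (z + (y j:ℂ) * Complex.I)).det) (g z) < ε := by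
      intro ε hε
      obtain ⟨ρ, hρ, hρ'⟩ := hdetUC ε hε
      have h1 := hUnif (min ρ 1 / 2) (by positivity)
      filter_upwards [h1] with j hj z hz
      have h2 := hj z hz
      have hQV : Q z ∈ Metric.closedBall (0 : Matrix (Fin n) (Fin n) ℂ) (B₀+1) := by
        rw [Metric.mem_closedBall, dist_zero_right]
        linarith [hQbound z hz]
      have hΔV : Δ (z + (y j:ℂ) * Complex.I)
          ∈ Metric.closedBall (0 : Matrix (Fin n) (Fin n) ℂ) (B₀+1) := by
        rw [Metric.mem_closedBall, dist_zero_right]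
        have h4 : ‖Δ (z + (y j:ℂ) * Complex.I)‖
            ≤ ‖Δ (z + (y j:ℂ) * Complex.I) - Q z‖ + ‖Q z‖ := by
          have := norm_add_le (Δ (z + (y j:ℂ) * Complex.I) - Q z) (Q z)
          simpa using this
        have h5 : min ρ 1 / 2 ≤ 1 := by
          have := min_le_right ρ 1
          linarith
        linarith [hQbound z hz]
      have h3 : dist (Δ (z + (y j:ℂ) * Complex.I)) (Q z) < ρ := by
        rw [dist_eq_norm]
        have h5 : min ρ 1 / 2 < ρ := by
          have := min_le_left ρ 1
          linarith
        linarith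
      exact hρ' _ hΔV _ hQV h3
    -- g vanishes at xbarc
    have hgx : g xbarc = 0 := by
      by_contra h0
      have hεg : 0 < ‖g xbarc‖ := norm_pos_iff.2 h0
      have e1 := hdetclose (‖g xbarc‖/3) (by positivity)
      have e2 : ∀ᶠ j in atTop, dist (g ((xs j : ℝ) : ℂ)) (g xbarc) < ‖g xbarc‖/3 := by
        have hcont : Tendsto (fun j => g ((xs j : ℝ) : ℂ)) atTop (𝓝 (g xbarc)) := by
          refine (hgcont.tendsto xbarc).comp ?_
          exact (Complex.continuous_ofReal.tendsto xbar).comp hxlim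
        exact Metric.tendsto_nhds.mp hcont _ (by positivity)
      have e3 : ∀ᶠ j in atTop, ‖F (zs (ψ j) : ℂ)‖ < ‖g xbarc‖/3 :=
        (hF0.comp hψmono.tendsto_atTop).eventually_lt_const (by positivity)
      have e4 : ∀ᶠ j in atTop, ((xs j : ℝ) : ℂ) ∈ K := by
        have h6 := Metric.tendsto_nhds.mp hxlim r hrpos
        filter_upwards [h6] with j hj
        rw [hK, Metric.mem_closedBall, hxbarc]
        have h7 : dist ((xs j : ℝ) : ℂ) ((xbar : ℝ) : ℂ) = dist (xs j) xbar := by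
          rw [Complex.dist_eq, Real.dist_eq, ← Complex.ofReal_sub, Complex.norm_real, Real.norm_eq_abs]
        rw [h7]
        exact hj.le
      obtain ⟨j, h1, h2, h3, h4⟩ := (e1.and (e2.and (e3.and e4))).exists
      have key1 : dist ((Δ (((xs j : ℝ) : ℂ) + (y j:ℂ) * Complex.I)).det) (g ((xs j : ℝ) : ℂ))
          < ‖g xbarc‖/3 := h1 _ h4
      have hwj : ((xs j : ℝ) : ℂ) + ((y j : ℝ) : ℂ) * Complex.I = (zs (ψ j) : ℂ) :=
        Complex.re_add_im _
      rw [hwj] at key1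
      have htri : ‖g xbarc‖ ≤ dist (g xbarc) (g ((xs j : ℝ) : ℂ))
          + dist (g ((xs j : ℝ) : ℂ)) (F (zs (ψ j) : ℂ)) + ‖F (zs (ψ j) : ℂ)‖ := by
        have t1 : ‖g xbarc‖ = dist (g xbarc) 0 := (dist_zero_right _).symm
        rw [t1]
        calc dist (g xbarc) 0 ≤ dist (g xbarc) (F (zs (ψ j) : ℂ)) + dist (F (zs (ψ j) : ℂ)) 0 :=
              dist_triangle _ _ _
          _ ≤ (dist (g xbarc) (g ((xs j : ℝ) : ℂ)) + dist (g ((xs j : ℝ) : ℂ)) (F (zs (ψ j) : ℂ)))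
              + dist (F (zs (ψ j) : ℂ)) 0 := by
              have := dist_triangle (g xbarc) (g ((xs j : ℝ) : ℂ)) (F (zs (ψ j) : ℂ))
              linarith
          _ = _ := by rw [dist_zero_right]
      have hd2 : dist (g ((xs j : ℝ) : ℂ)) (F (zs (ψ j) : ℂ)) < ‖g xbarc‖/3 := by
        rw [dist_comm]
        exact key1
      rw [dist_comm (g xbarc)] at htri
      linarith
    -- isolated zeros of g
    have hganal : AnalyticAt ℂ g xbarc :=
      (hgdiff.differentiableOn.analyticOnNhd isOpen_univ) xbarc (Set.mem_univ _)
    rcases hganal.eventually_eq_zero_or_eventually_ne_zero with hvan | hnev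
    · -- g ≡ 0 contradicts the far field bound
      have hAnal : AnalyticOnNhd ℂ g Set.univ := hgdiff.differentiableOn.analyticOnNhd isOpen_univ
      have hzero := hAnal.eqOn_zero_of_preconnected_of_eventuallyEq_zero
        isPreconnected_univ (Set.mem_univ xbarc)
        (by filter_upwards [hvan] with z hz using hz)
      have hfq := hfarQ c hc ((M + 1 : ℝ) : ℂ) (by simp)
      have h0 : g ((M + 1 : ℝ) : ℂ) = 0 := hzero (Set.mem_univ _)
      have h1 : (1:ℝ)/2 ≤ ‖g ((M + 1 : ℝ) : ℂ)‖ := hfq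
      rw [h0] at h1
      norm_num at h1
    · rw [eventually_nhdsWithin_iff, Metric.eventually_nhds_iff] at hnev
      obtain ⟨ρ₁, hρ₁pos, hρ₁⟩ := hnev
      set r₁ : ℝ := min (ρ₁/2) r with hr₁
      have hr₁pos : 0 < r₁ := lt_min (by linarith) hrpos
      have hr₁r : r₁ ≤ r := min_le_right _ _
      have hsph : ∀ z ∈ Metric.sphere xbarc r₁, g z ≠ 0 := by
        intro z hzs
        rw [Metric.mem_sphere] at hzs
        apply hρ₁
        · rw [hzs]
          calc r₁ ≤ ρ₁/2 := min_le_left _ _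
            _ < ρ₁ := by linarith
        · simp only [Set.mem_compl_iff, Set.mem_singleton_iff]
          intro hzeq
          rw [hzeq] at hzs
          simp at hzs
          linarith
      have hsphne : (Metric.sphere xbarc r₁).Nonempty :=
        NormedSpace.sphere_nonempty.2 hr₁pos.le
      obtain ⟨w₀, hw₀mem, hw₀min⟩ := (isCompact_sphere xbarc r₁).exists_isMinOn hsphne
        (hgcont.norm.continuousOn)
      set δm : ℝ := ‖g w₀‖ with hδm
      have hδmpos : 0 < δm := norm_pos_iff.2 (hsph w₀ hw₀mem)
      have hminS : ∀ z ∈ Metric.sphere xbarc r₁, δm ≤ ‖g z‖ := fun z hz => hw₀min hz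
      have hsphK : Metric.sphere xbarc r₁ ⊆ K := by
        intro z hz
        rw [Metric.mem_sphere] at hz
        rw [hK, Metric.mem_closedBall, hz]
        exact hr₁r
      have hcbK : Metric.closedBall xbarc r₁ ⊆ K := Metric.closedBall_subset_closedBall hr₁r
      obtain ⟨j, hj⟩ := (hdetclose (δm/4) (by positivity)).exists
      -- non-vanishing of the translated determinant on the closed ball
      have hnz : ∀ z ∈ Metric.closedBall xbarc r₁, (Δ (z + (y j:ℂ) * Complex.I)).det ≠ 0 := by
        intro z hz h0
        have h1 := hroots _ h0
        have h2 : (z + (y j:ℂ) * Complex.I).re = z.re := by simp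
        rw [h2] at h1
        have h3 := hKre z (hcbK hz)
        rw [hr] at h3
        linarith
      have hdiffj : Differentiable ℂ (fun z => (Δ (z + (y j:ℂ) * Complex.I)).det) :=
        differentiable_det (hΔdiff.comp (differentiable_id.add_const _))
      -- maximum modulus principle applied to the inverse
      have hmm : ‖((Δ (xbarc + (y j:ℂ) * Complex.I)).det)⁻¹‖ ≤ (δm/2)⁻¹ := by
        have hcl : closure (Metric.ball xbarc r₁) = Metric.closedBall xbarc r₁ :=
          closure_ball xbarc hr₁pos.ne'
        have hdo : DiffContOnCl ℂ (fun z => ((Δ (z + (y j:ℂ) * Complex.I)).det)⁻¹)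
            (Metric.ball xbarc r₁) := by
          apply DifferentiableOn.diffContOnCl
          rw [hcl]
          intro z hz
          exact ((hdiffj z).inv (hnz z hz)).differentiableWithinAt
        refine Complex.norm_le_of_forall_mem_frontier_norm_le Metric.isBounded_ball hdo ?_ ?_
        · intro z hz
          rw [frontier_ball xbarc hr₁pos.ne'] at hz
          have hlow : δm/2 ≤ ‖(Δ (z + (y j:ℂ) * Complex.I)).det‖ := by
            have h5 := hj z (hsphK hz)
            rw [dist_eq_norm] at h5
            have h6 : ‖g z‖ - ‖(Δ (z + (y j:ℂ) * Complex.I)).det - g z‖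
                ≤ ‖(Δ (z + (y j:ℂ) * Complex.I)).det‖ := by
              have := norm_sub_norm_le (g z) (g z - (Δ (z + (y j:ℂ) * Complex.I)).det)
              have h7 : g z - (g z - (Δ (z + (y j:ℂ) * Complex.I)).det)
                  = (Δ (z + (y j:ℂ) * Complex.I)).det := by ring
              rw [h7, norm_sub_rev] at this
              linarith
            have h8 := hminS z hz
            linarith
          rw [norm_inv]
          apply inv_anti₀ (by positivity) hlow
        · rw [hcl]
          exact Metric.mem_closedBall_self hr₁pos.le
      -- but the determinant at the center tends to 0
      have hcenter : dist ((Δ (xbarc + (y j:ℂ) * Complex.I)).det) (g xbarc) < δm/4 :=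
        hj xbarc (Metric.mem_closedBall_self hrpos.le)
      rw [hgx, dist_zero_right] at hcenter
      have hcpos : 0 < ‖(Δ (xbarc + (y j:ℂ) * Complex.I)).det‖ :=
        norm_pos_iff.2 (hnz xbarc (Metric.mem_closedBall_self hr₁pos.le))
      rw [norm_inv] at hmm
      have hge : δm/2 ≤ ‖(Δ (xbarc + (y j:ℂ) * Complex.I)).det‖ := by
        by_contra hlt
        push_neg at hlt
        have h9 : ((δm/2):ℝ)⁻¹ < ‖(Δ (xbarc + (y j:ℂ) * Complex.I)).det‖⁻¹ :=
          inv_strictAnti₀ hcpos hlt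
        linarith
      linarith
  · -- bounded subsequence case
    push_neg at hbd
    obtain ⟨B, hB⟩ := hbd
    obtain ⟨φ, hφmono, hφ⟩ := Filter.extraction_of_frequently_atTop hB
    have hmem : ∀ j, (zs (φ j) : ℂ) ∈ Metric.closedBall (0:ℂ) B := fun j => by
      rw [Metric.mem_closedBall, dist_zero_right]
      exact (hφ j).le
    obtain ⟨zbar, hzbarmem, ψ, hψmono, hψtend⟩ := (isCompact_closedBall (0:ℂ) B).tendsto_subseq hmem
    have hFlim : Tendsto (fun j => ‖F ((zs (φ (ψ j)) : ℂ))‖) atTop (𝓝 0) :=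
      hF0.comp (hφmono.comp hψmono).tendsto_atTop
    have hFzbar : Tendsto (fun j => F ((zs (φ (ψ j)) : ℂ))) atTop (𝓝 (F zbar)) :=
      (hFcont.tendsto zbar).comp hψtend
    have h0 : F zbar = 0 := by
      have h1 : Tendsto (fun j => F ((zs (φ (ψ j)) : ℂ))) atTop (𝓝 0) :=
        tendsto_zero_iff_norm_tendsto_zero.2 hFlim
      exact tendsto_nhds_unique hFzbar h1
    have h2 := hroots _ h0
    have h3 : -ν ≤ zbar.re := by
      refine ge_of_tendsto (Complex.continuous_re.continuousAt.tendsto.comp hψtend) ?_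
      filter_upwards with j
      exact (zs (φ (ψ j))).2
    linarith
end

section
/- Let (ω_k)_{k≥1} be a sequence of real numbers and (y_j)_{j≥0} a sequence of reals such that e^{−i τ_k y_j} → e^{i ω_k} as j → ∞ for every k ≥ 1. Define Δ₀^ω(x) = I + Σ_{k=1}^∞ A_k e^{i ω_k} e^{−τ_k x} for x ∈ ℝ and Δ₀(z) = I + Σ_{k=1}^∞ A_k e^{−τ_k z} for z ∈ ℂ. Then for every β > 0, sup_{x ∈ [−β,β]} |Δ₀(x + i y_j) − Δ₀^ω(x)| → 0 as j → ∞. -/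
open MeasureTheory Matrix Filter Complex

attribute [local instance] Matrix.frobeniusNormedAddCommGroup Matrix.frobeniusNormedSpace

lemma norm_map_ofReal_frob {n : ℕ} (M : Matrix (Fin n) (Fin n) ℝ) :
    ‖M.map (Complex.ofReal)‖ = ‖M‖ := by
  simp [Matrix.frobenius_norm_def, Matrix.map_apply]

/-- if `e^{-iτ_k y_j} → e^{iω_k}` for every `k`, then
`sup_{x ∈ [-β,β]} ‖Δ₀(x + i y_j) - Δ₀^ω(x)‖ → 0` as `j → ∞`. -/
theorem delta0_uniform_convergence_on_strip
    (n : ℕ) (hn : 1 ≤ n) (τs : ℝ) (hτs : 0 < τs)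
    (A : ℕ → Matrix (Fin n) (Fin n) ℝ) (hA : Summable fun k => ‖A k‖)
    (τ : ℕ → ℝ) (hτmono : StrictMono τ) (hτ : ∀ k, τ k ∈ Set.Ioc 0 τs)
    (ω : ℕ → ℝ) (y : ℕ → ℝ)
    (hconv : ∀ k : ℕ, Tendsto (fun j : ℕ => Complex.exp (-Complex.I * (τ k : ℂ) * (y j : ℂ)))
      atTop (nhds (Complex.exp (Complex.I * (ω k : ℂ)))))
    (Δ₀ : ℂ → Matrix (Fin n) (Fin n) ℂ)
    (hΔ₀ : ∀ z : ℂ, Δ₀ z =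
      1 + ∑' k : ℕ, Complex.exp (-(τ k : ℂ) * z) • (A k).map Complex.ofReal)
    (Δ₀ω : ℝ → Matrix (Fin n) (Fin n) ℂ)
    (hΔ₀ω : ∀ x : ℝ, Δ₀ω x =
      1 + ∑' k : ℕ, (Complex.exp (Complex.I * (ω k : ℂ)) * Complex.exp (-(τ k : ℂ) * (x : ℂ)))
        • (A k).map Complex.ofReal)
    (β : ℝ) (hβ : 0 < β) :
    Tendsto (fun j : ℕ => ⨆ x ∈ Set.Icc (-β) β, ‖Δ₀ ((x : ℂ) + (y j : ℂ) * Complex.I) - Δ₀ω x‖)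
      atTop (nhds 0) := by
  set c : ℝ := Real.exp (τs * β) with hc
  have hc0 : 0 ≤ c := (Real.exp_pos _).le
  set d : ℕ → ℕ → ℝ := fun j k =>
    ‖Complex.exp (-Complex.I * (τ k : ℂ) * (y j : ℂ)) - Complex.exp (Complex.I * (ω k : ℂ))‖
    with hd
  have hd0 : ∀ j k, 0 ≤ d j k := fun j k => norm_nonneg _
  have hd2 : ∀ j k, d j k ≤ 2 := by
    intro j k
    have h1 : ‖Complex.exp (-Complex.I * (τ k : ℂ) * (y j : ℂ))‖ = 1 := by
      rw [Complex.norm_exp]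
      simp
    have h2 : ‖Complex.exp (Complex.I * (ω k : ℂ))‖ = 1 := by
      rw [Complex.norm_exp]
      simp
    calc d j k ≤ ‖Complex.exp (-Complex.I * (τ k : ℂ) * (y j : ℂ))‖ +
        ‖Complex.exp (Complex.I * (ω k : ℂ))‖ := norm_sub_le _ _
      _ = 2 := by rw [h1, h2]; norm_num
  -- the dominating sequence
  set S : ℕ → ℝ := fun j => ∑' k, c * ‖A k‖ * d j k with hS
  have hSsum : ∀ j, Summable (fun k => c * ‖A k‖ * d j k) := by
    intro j
    apply Summable.of_nonneg_of_le
      (fun k => by positivity)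
      (fun k => by
        have := hd2 j k
        have h0 : 0 ≤ c * ‖A k‖ := by positivity
        calc c * ‖A k‖ * d j k ≤ c * ‖A k‖ * 2 := by nlinarith [hd0 j k]
          _ = c * 2 * ‖A k‖ := by ring)
    exact (hA.mul_left (c * 2))
  have hS0 : ∀ j, 0 ≤ S j := fun j => tsum_nonneg (fun k => by positivity)
  have hStendsto : Tendsto S atTop (nhds 0) := by
    have := tendsto_tsum_of_dominated_convergence (𝓕 := (atTop : Filter ℕ))
      (f := fun j k => c * ‖A k‖ * d j k) (g := fun _ => (0 : ℝ))
      (bound := fun k => c * ‖A k‖ * 2)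
      ((hA.mul_left c).mul_right 2)
      (by
        intro k
        have hdk : Tendsto (fun j => d j k) atTop (nhds 0) := by
          have := (hconv k).sub_const (Complex.exp (Complex.I * (ω k : ℂ)))
          simpa [hd] using this.norm
        have := hdk.const_mul (c * ‖A k‖)
        simpa using this)
      (by
        filter_upwards with j k
        have h0 : 0 ≤ c * ‖A k‖ := by positivity
        rw [Real.norm_of_nonneg (by positivity)]
        nlinarith [hd0 j k, hd2 j k])
    simpa using this
  -- key pointwise estimate
  have key : ∀ j : ℕ, ∀ x ∈ Set.Icc (-β) β,
      ‖Δ₀ ((x : ℂ) + (y j : ℂ) * Complex.I) - Δ₀ω x‖ ≤ S j := by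
    intro j x hx
    have hxbound : ∀ k, Real.exp (-(τ k) * x) ≤ c := by
      intro k
      have hτk := hτ k
      apply Real.exp_le_exp.mpr
      have h1 : τ k * (-x) ≤ τ k * β :=
        mul_le_mul_of_nonneg_left (by linarith [hx.1]) hτk.1.le
      have h2 : τ k * β ≤ τs * β := mul_le_mul_of_nonneg_right hτk.2 hβ.le
      nlinarith
    set z : ℂ := (x : ℂ) + (y j : ℂ) * Complex.I with hz
    -- coefficient factorization
    have hco : ∀ k : ℕ, Complex.exp (-(τ k : ℂ) * z) =
        Complex.exp (-(τ k : ℂ) * (x : ℂ)) *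
          Complex.exp (-Complex.I * (τ k : ℂ) * (y j : ℂ)) := by
      intro k
      rw [← Complex.exp_add]
      congr 1
      rw [hz]
      ring
    have hnormexp : ∀ k : ℕ, ‖Complex.exp (-(τ k : ℂ) * (x : ℂ))‖ = Real.exp (-(τ k) * x) := by
      intro k
      rw [Complex.norm_exp]
      norm_num
    -- the two series
    set f : ℕ → Matrix (Fin n) (Fin n) ℂ := fun k =>
      Complex.exp (-(τ k : ℂ) * z) • (A k).map Complex.ofReal with hf
    set g : ℕ → Matrix (Fin n) (Fin n) ℂ := fun k =>
      (Complex.exp (Complex.I * (ω k : ℂ)) * Complex.exp (-(τ k : ℂ) * (x : ℂ)))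
        • (A k).map Complex.ofReal with hg
    have hfg : ∀ k, f k - g k =
        (Complex.exp (-(τ k : ℂ) * (x : ℂ)) *
          (Complex.exp (-Complex.I * (τ k : ℂ) * (y j : ℂ)) -
            Complex.exp (Complex.I * (ω k : ℂ)))) • (A k).map Complex.ofReal := by
      intro k
      rw [hf, hg]
      simp only [hco k]
      rw [← sub_smul]
      congr 1
      ring
    have hfgnorm : ∀ k, ‖f k - g k‖ ≤ c * ‖A k‖ * d j k := by
      intro k
      rw [hfg k, norm_smul, norm_map_ofReal_frob, norm_mul, hnormexp k]
      have h1 : Real.exp (-(τ k) * x) * d j k ≤ c * d j k :=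
        mul_le_mul_of_nonneg_right (hxbound k) (hd0 j k)
      calc Real.exp (-(τ k) * x) * d j k * ‖A k‖ ≤ c * d j k * ‖A k‖ :=
            mul_le_mul_of_nonneg_right h1 (norm_nonneg _)
        _ = c * ‖A k‖ * d j k := by ring
    have hfsum : Summable f := by
      apply Summable.of_norm
      apply Summable.of_nonneg_of_le (fun k => norm_nonneg _)
        (fun k => ?_) (hA.mul_left c)
      rw [hf]
      simp only [norm_smul, norm_map_ofReal_frob]
      have hzre : ∀ k : ℕ, ‖Complex.exp (-(τ k : ℂ) * z)‖ = Real.exp (-(τ k) * x) := by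
        intro k
        rw [hco k, norm_mul, hnormexp k]
        have : ‖Complex.exp (-Complex.I * (τ k : ℂ) * (y j : ℂ))‖ = 1 := by
          rw [Complex.norm_exp]; simp
        rw [this, mul_one]
      rw [hzre k]
      exact mul_le_mul_of_nonneg_right (hxbound k) (norm_nonneg _)
    have hgsum : Summable g := by
      apply Summable.of_norm
      apply Summable.of_nonneg_of_le (fun k => norm_nonneg _)
        (fun k => ?_) (hA.mul_left c)
      rw [hg]
      simp only [norm_smul, norm_map_ofReal_frob, norm_mul]
      have h1 : ‖Complex.exp (Complex.I * (ω k : ℂ))‖ = 1 := by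
        rw [Complex.norm_exp]; simp
      rw [h1, one_mul, hnormexp k]
      exact mul_le_mul_of_nonneg_right (hxbound k) (norm_nonneg _)
    have hdiff : Δ₀ z - Δ₀ω x = ∑' k, (f k - g k) := by
      rw [hΔ₀ z, hΔ₀ω x, Summable.tsum_sub hfsum hgsum]
      abel
    rw [hdiff]
    calc ‖∑' k, (f k - g k)‖ ≤ ∑' k, ‖f k - g k‖ := by
          apply norm_tsum_le_tsum_norm
          apply Summable.of_nonneg_of_le (fun k => norm_nonneg _) hfgnorm (hSsum j)
      _ ≤ S j := Summable.tsum_le_tsum hfgnorm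
          (Summable.of_nonneg_of_le (fun k => norm_nonneg _) hfgnorm (hSsum j)) (hSsum j)
  -- squeeze
  apply squeeze_zero (fun j => ?_) (fun j => ?_) hStendsto
  · exact Real.iSup_nonneg fun x => Real.iSup_nonneg fun _ => norm_nonneg _
  · exact Real.iSup_le (fun x => Real.iSup_le (fun hx => key j x hx) (hS0 j)) (hS0 j)
end

section
/- Let X₀ : [−τ*, 0] → ℝⁿ be measurable and let X : [−τ*, ∞) → ℝⁿ be a measurable, locally integrable function with X = X₀ almost everywhere on [−τ*, 0]. Define x(t) = X(t)·1_{t ≥ 0} and, for t ∈ ℝ, f(t) = −1_{[0,τ*]}(t) · ( Σ_{k=1}^∞ A_k X₀(t − τ_k) 1_{t < τ_k} + ∫_t^{τ*} N(s) X₀(t − s) ds ). Then X satisfies, for almost every t > 0, X(t) + Σ_{k=1}^∞ A_k X(t − τ_k) + ∫₀^{τ*} N(s) X(t − s) ds = 0, if and only if x satisfies, for almost every t ≥ 0, x(t) + Σ_{k=1}^∞ A_k x(t − τ_k) 1_{t ≥ τ_k} + ∫₀^{min(t, τ*)} N(s) x(t − s) ds = f(t). -/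
open MeasureTheory Matrix Filter Complex
open scoped ENNReal NNReal

attribute [local instance] Matrix.frobeniusNormedAddCommGroup Matrix.frobeniusNormedSpace

lemma frob_entry_le {n : ℕ} (A : Matrix (Fin n) (Fin n) ℝ) (i j : Fin n) :
    ‖A i j‖ ≤ ‖A‖ := by
  have h : ‖A i j‖₊ ≤ ‖A‖₊ := by
    rw [Matrix.frobenius_nnnorm_def]
    have h1 : ‖A i j‖₊ = (‖A i j‖₊ ^ (2:ℝ)) ^ (1/2 : ℝ) := by
      rw [← NNReal.rpow_mul]; norm_num
    rw [h1]
    refine NNReal.rpow_le_rpow ?_ (by norm_num)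
    calc ‖A i j‖₊ ^ (2:ℝ) ≤ ∑ j', ‖A i j'‖₊ ^ (2:ℝ) :=
          Finset.single_le_sum (f := fun j' => ‖A i j'‖₊ ^ (2:ℝ))
            (fun _ _ => zero_le) (Finset.mem_univ j)
      _ ≤ ∑ i', ∑ j', ‖A i' j'‖₊ ^ (2:ℝ) :=
          Finset.single_le_sum (f := fun i' => ∑ j', ‖A i' j'‖₊ ^ (2:ℝ))
            (fun _ _ => zero_le) (Finset.mem_univ i)
  exact_mod_cast h

lemma norm_mulVec_le' {n : ℕ} (A : Matrix (Fin n) (Fin n) ℝ) (v : Fin n → ℝ) :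
    ‖A *ᵥ v‖ ≤ (n : ℝ) * ‖A‖ * ‖v‖ := by
  refine pi_norm_le_iff_of_nonneg (by positivity) |>.mpr fun i => ?_
  calc ‖(A *ᵥ v) i‖ = ‖∑ j, A i j * v j‖ := rfl
    _ ≤ ∑ j, ‖A i j * v j‖ := norm_sum_le _ _
    _ ≤ ∑ _j : Fin n, ‖A‖ * ‖v‖ := by
        refine Finset.sum_le_sum fun j _ => ?_
        rw [norm_mul]
        exact mul_le_mul (frob_entry_le A i j) (norm_le_pi_norm v j) (norm_nonneg _)
          (norm_nonneg _)
    _ = (n : ℝ) * ‖A‖ * ‖v‖ := by simp [Finset.sum_const, mul_assoc]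

lemma enorm_mulVec_le' {n : ℕ} (A : Matrix (Fin n) (Fin n) ℝ) (v : Fin n → ℝ) :
    (‖A *ᵥ v‖₊ : ℝ≥0∞) ≤ (n : ℝ≥0∞) * ‖A‖₊ * ‖v‖₊ := by
  have h : ‖A *ᵥ v‖₊ ≤ (n : ℝ≥0) * ‖A‖₊ * ‖v‖₊ := by
    rw [← NNReal.coe_le_coe]
    push_cast
    exact norm_mulVec_le' A v
  calc (‖A *ᵥ v‖₊ : ℝ≥0∞) ≤ ((((n:ℝ≥0) * ‖A‖₊ * ‖v‖₊) : ℝ≥0) : ℝ≥0∞) := by exact_mod_cast h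
    _ = (n : ℝ≥0∞) * ‖A‖₊ * ‖v‖₊ := by push_cast; ring

lemma setLIntegral_shift (g : ℝ → ℝ≥0∞) (c a b : ℝ) :
    ∫⁻ t in Set.Ioc a b, g (t - c) = ∫⁻ u in Set.Ioc (a - c) (b - c), g u := by
  rw [← lintegral_indicator measurableSet_Ioc, ← lintegral_indicator measurableSet_Ioc]
  rw [← lintegral_add_right_eq_self (fun u => (Set.Ioc (a-c) (b-c)).indicator g u) (-c)]
  congr 1; ext t
  have hmem : t + -c ∈ Set.Ioc (a-c) (b-c) ↔ t ∈ Set.Ioc a b := by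
    simp only [Set.mem_Ioc]
    constructor <;> intro h <;> constructor <;> linarith [h.1, h.2]
  rw [Set.indicator_apply, Set.indicator_apply]
  by_cases h : t ∈ Set.Ioc a b
  · rw [if_pos h, if_pos (hmem.mpr h)]
    norm_num [sub_eq_add_neg]
  · rw [if_neg h, if_neg (fun hc => h (hmem.mp hc))]

/-- one-to-one correspondence between solutions of the IDE with
initial datum `X₀` and solutions of the Volterra equation `x + μ*x = f`. -/
theorem IDE_iff_volterra_form
    (n : ℕ) (hn : 1 ≤ n) (τs : ℝ) (hτs : 0 < τs)
    (A : ℕ → Matrix (Fin n) (Fin n) ℝ) (hA : Summable fun k => ‖A k‖)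
    (τ : ℕ → ℝ) (hτmono : StrictMono τ) (hτ : ∀ k, τ k ∈ Set.Ioc 0 τs)
    (N : ℝ → Matrix (Fin n) (Fin n) ℝ) (hN : @IntegrableOn _ _ _ _ SeminormedAddGroup.toContinuousENorm N (Set.Ioo 0 τs) volume)
    (X₀ : ℝ → (Fin n → ℝ)) (hX₀meas : Measurable X₀)
    (X : ℝ → (Fin n → ℝ)) (hXmeas : Measurable X)
    (hXloc : LocallyIntegrableOn X (Set.Ici (-τs)))
    (hinit : ∀ᵐ t : ℝ, t ∈ Set.Icc (-τs) 0 → X t = X₀ t)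
    (x : ℝ → (Fin n → ℝ)) (hx : ∀ t : ℝ, x t = if 0 ≤ t then X t else 0)
    (f : ℝ → (Fin n → ℝ))
    (hf : ∀ t : ℝ, f t =
      -(Set.Icc (0:ℝ) τs).indicator (fun u =>
        (∑' k : ℕ, if u < τ k then (A k) *ᵥ X₀ (u - τ k) else 0)
        + ∫ s in Set.Ioo u τs, (N s) *ᵥ X₀ (u - s)) t) :
    (∀ᵐ t : ℝ, 0 < t →
      X t + (∑' k : ℕ, (A k) *ᵥ X (t - τ k))
        + (∫ s in Set.Ioo (0:ℝ) τs, (N s) *ᵥ X (t - s)) = 0)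
    ↔
    (∀ᵐ t : ℝ, 0 ≤ t →
      x t + (∑' k : ℕ, if τ k ≤ t then (A k) *ᵥ x (t - τ k) else 0)
        + (∫ s in Set.Ioo (0:ℝ) (min t τs), (N s) *ᵥ x (t - s)) = f t) := by
  classical
  -- integrability of X on compact intervals
  have hXint : ∀ m : ℕ, IntegrableOn X (Set.Icc (-τs) (m:ℝ)) := fun m =>
    hXloc.integrableOn_compact_subset (fun u hu => hu.1) isCompact_Icc
  set C : ℕ → ℝ≥0∞ := fun m => ∫⁻ u in Set.Icc (-τs) (m:ℝ), (‖X u‖₊ : ℝ≥0∞) with hCdef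
  have hC : ∀ m, C m < ⊤ := fun m => (hXint m).2
  have hXk : ∀ k : ℕ, Measurable fun t : ℝ => ((‖X (t - τ k)‖₊ : ℝ≥0∞)) := fun k =>
    (hXmeas.comp (measurable_id.sub measurable_const)).nnnorm.coe_nnreal_ennreal
  have hshift_le : ∀ (c : ℝ), 0 < c → c ≤ τs → ∀ m : ℕ,
      ∫⁻ t in Set.Ioc (0:ℝ) (m:ℝ), (‖X (t - c)‖₊ : ℝ≥0∞) ≤ C m := by
    intro c hc0 hcτ m
    rw [setLIntegral_shift (fun u => (‖X u‖₊ : ℝ≥0∞)) c 0 m]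
    refine lintegral_mono_set fun u hu => ?_
    simp only [Set.mem_Ioc] at hu
    exact Set.mem_Icc.mpr ⟨by linarith [hu.1], by linarith [hu.2]⟩
  have hAnn : (∑' k : ℕ, (‖A k‖₊ : ℝ≥0∞)) ≠ ⊤ := by
    rw [ENNReal.tsum_coe_ne_top_iff_summable]
    exact NNReal.summable_coe.mp (by simpa using hA)
  -- P1 : a.e. summability of the norms
  have hP1 : ∀ᵐ t : ℝ, 0 < t → Summable (fun k : ℕ => ‖A k‖ * ‖X (t - τ k)‖) := by
    have key : ∀ m : ℕ, ∀ᵐ t : ℝ, t ∈ Set.Ioc (0:ℝ) (m:ℝ) →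
        Summable (fun k : ℕ => ‖A k‖ * ‖X (t - τ k)‖) := by
      intro m
      have hmeas : ∀ k : ℕ, Measurable fun t : ℝ =>
          (‖A k‖₊ : ℝ≥0∞) * (‖X (t - τ k)‖₊ : ℝ≥0∞) := fun k =>
        measurable_const.mul (hXk k)
      have hfin : ∫⁻ t in Set.Ioc (0:ℝ) (m:ℝ),
          ∑' k : ℕ, (‖A k‖₊ : ℝ≥0∞) * (‖X (t - τ k)‖₊ : ℝ≥0∞) ≠ ⊤ := by
        rw [lintegral_tsum fun k => (hmeas k).aemeasurable]
        have hle : ∀ k : ℕ, (∫⁻ t in Set.Ioc (0:ℝ) (m:ℝ), (‖A k‖₊ : ℝ≥0∞) * ‖X (t - τ k)‖₊)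
            ≤ (‖A k‖₊ : ℝ≥0∞) * C m := by
          intro k
          calc ∫⁻ t in Set.Ioc (0:ℝ) (m:ℝ), (‖A k‖₊ : ℝ≥0∞) * ‖X (t - τ k)‖₊
              = (‖A k‖₊ : ℝ≥0∞) * ∫⁻ t in Set.Ioc (0:ℝ) (m:ℝ), (‖X (t - τ k)‖₊ : ℝ≥0∞) :=
                lintegral_const_mul _ (hXk k)
            _ ≤ (‖A k‖₊ : ℝ≥0∞) * C m := by
                gcongr
                exact hshift_le (τ k) (hτ k).1 (hτ k).2 m
        refine ne_top_of_le_ne_top ?_ (ENNReal.tsum_le_tsum hle)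
        rw [ENNReal.tsum_mul_right]
        exact ENNReal.mul_ne_top hAnn (hC m).ne
      have := ae_lt_top (Measurable.ennreal_tsum hmeas) hfin
      filter_upwards [ae_imp_of_ae_restrict this] with t ht hmem
      have hsum' : Summable fun k : ℕ => (‖A k‖₊ * ‖X (t - τ k)‖₊ : ℝ≥0) := by
        rw [← ENNReal.tsum_coe_ne_top_iff_summable]
        push_cast
        exact (ht hmem).ne
      have := NNReal.summable_coe.mpr hsum'
      simpa [NNReal.coe_mul] using this
    have h := ae_all_iff.mpr key
    filter_upwards [h] with t ht ht0
    exact ht ⌈t⌉₊ ⟨ht0, Nat.le_ceil t⟩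
  -- P2 : a.e. compatibility with X₀ at the delay points
  have hP2 : ∀ᵐ t : ℝ, ∀ k : ℕ,
      t - τ k ∈ Set.Icc (-τs) 0 → X (t - τ k) = X₀ (t - τ k) := by
    rw [ae_all_iff]
    intro k
    have h := ((measurePreserving_add_right (volume : Measure ℝ)
      (-τ k)).quasiMeasurePreserving.tendsto_ae).eventually hinit
    simpa [sub_eq_add_neg] using h
  -- P3 : a.e. compatibility under convolution shifts
  have hP3 : ∀ᵐ t : ℝ, ∀ᵐ s : ℝ,
      t - s ∈ Set.Icc (-τs) 0 → X (t - s) = X₀ (t - s) := by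
    have h := ((quasiMeasurePreserving_sub_of_right_invariant (volume : Measure ℝ)
      (volume : Measure ℝ)).tendsto_ae).eventually hinit
    exact Measure.ae_ae_of_ae_prod h
  -- AE strong measurability of the convolution integrand
  obtain ⟨Nm, hNmSM, hNNm⟩ : ∃ Nm : ℝ → Matrix (Fin n) (Fin n) ℝ,
      StronglyMeasurable Nm ∧ N =ᵐ[volume.restrict (Set.Ioo 0 τs)] Nm :=
    ⟨hN.1.mk N, hN.1.stronglyMeasurable_mk, hN.1.ae_eq_mk⟩
  have hentry : ∀ i j : Fin n,
      Continuous (fun M : Matrix (Fin n) (Fin n) ℝ => M i j) := by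
    intro i j
    let L : Matrix (Fin n) (Fin n) ℝ →ₗ[ℝ] ℝ :=
      { toFun := fun M => M i j, map_add' := fun _ _ => rfl, map_smul' := fun _ _ => rfl }
    exact L.continuous_of_finiteDimensional
  have hNmentry : ∀ i j : Fin n, Measurable (fun s => Nm s i j) := fun i j =>
    ((hentry i j).comp_stronglyMeasurable hNmSM).measurable
  have hNmMeasV : ∀ t : ℝ, Measurable (fun s => Nm s *ᵥ X (t - s)) := by
    intro t
    rw [measurable_pi_iff]
    intro i
    simp only [Matrix.mulVec, dotProduct]
    exact Finset.measurable_sum _ fun j _ => (hNmentry i j).mul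
      ((measurable_pi_apply j).comp (hXmeas.comp (measurable_const.sub measurable_id)))
  have hAESM : ∀ t : ℝ, AEStronglyMeasurable (fun s => N s *ᵥ X (t - s))
      (volume.restrict (Set.Ioo 0 τs)) := fun t =>
    ((hNmMeasV t).aestronglyMeasurable).congr (hNNm.mono fun s hs => by dsimp only; rw [hs])
  -- P4 : a.e. integrability of the convolution integrand
  have hP4 : ∀ᵐ t : ℝ, 0 < t →
      IntegrableOn (fun s => N s *ᵥ X (t - s)) (Set.Ioo 0 τs) := by
    set g : ℝ → ℝ≥0∞ := fun s => (‖Nm s‖₊ : ℝ≥0∞) with hgdef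
    have hgmeas : Measurable g := hNmSM.nnnorm.measurable.coe_nnreal_ennreal
    have hg : (fun s => (‖N s‖₊ : ℝ≥0∞)) =ᵐ[volume.restrict (Set.Ioo 0 τs)] g :=
      hNNm.mono fun s hs => by rw [hgdef]; dsimp only; rw [hs]
    have key : ∀ m : ℕ, ∀ᵐ t : ℝ, t ∈ Set.Ioc (0:ℝ) (m:ℝ) →
        IntegrableOn (fun s => N s *ᵥ X (t - s)) (Set.Ioo 0 τs) := by
      intro m
      set F : ℝ → ℝ → ℝ≥0∞ := fun t s => g s * ‖X (t - s)‖₊ with hF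
      have hFmeas : Measurable (Function.uncurry F) :=
        (hgmeas.comp measurable_snd).mul
          ((hXmeas.comp (measurable_fst.sub measurable_snd)).nnnorm.coe_nnreal_ennreal)
      have hswap : ∫⁻ t in Set.Ioc (0:ℝ) (m:ℝ), ∫⁻ s in Set.Ioo 0 τs, F t s ≠ ⊤ := by
        rw [lintegral_lintegral_swap hFmeas.aemeasurable]
        have hbound : ∫⁻ s in Set.Ioo (0:ℝ) τs, ∫⁻ t in Set.Ioc (0:ℝ) (m:ℝ), F t s
            ≤ ∫⁻ s in Set.Ioo (0:ℝ) τs, g s * C m := by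
          refine lintegral_mono_ae ?_
          filter_upwards [ae_restrict_mem measurableSet_Ioo] with s hs
          calc ∫⁻ t in Set.Ioc (0:ℝ) (m:ℝ), F t s
              = g s * ∫⁻ t in Set.Ioc (0:ℝ) (m:ℝ), (‖X (t - s)‖₊ : ℝ≥0∞) :=
                lintegral_const_mul _
                  ((hXmeas.comp (measurable_id.sub measurable_const)).nnnorm.coe_nnreal_ennreal)
            _ ≤ g s * C m := by gcongr; exact hshift_le s hs.1 hs.2.le m
        refine ne_top_of_le_ne_top ?_ hbound
        rw [lintegral_mul_const' (C m) g (hC m).ne]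
        refine ENNReal.mul_ne_top ?_ (hC m).ne
        rw [lintegral_congr_ae hg.symm]
        exact hN.2.ne
      have hmeast : Measurable fun t => ∫⁻ s in Set.Ioo (0:ℝ) τs, F t s :=
        Measurable.lintegral_prod_right' hFmeas
      have := ae_lt_top hmeast hswap
      filter_upwards [ae_imp_of_ae_restrict this] with t ht hmem
      refine ⟨hAESM t, ?_⟩
      have hb : ∀ᵐ s ∂(volume.restrict (Set.Ioo 0 τs)),
          (‖N s *ᵥ X (t - s)‖₊ : ℝ≥0∞) ≤ (n : ℝ≥0∞) * F t s := by
        filter_upwards [hg] with s hgs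
        calc (‖N s *ᵥ X (t - s)‖₊ : ℝ≥0∞) ≤ (n : ℝ≥0∞) * ‖N s‖₊ * ‖X (t - s)‖₊ :=
              enorm_mulVec_le' _ _
          _ = (n : ℝ≥0∞) * F t s := by rw [hF]; dsimp only; rw [hgs]; ring
      calc ∫⁻ s in Set.Ioo (0:ℝ) τs, (‖N s *ᵥ X (t - s)‖₊ : ℝ≥0∞)
          ≤ ∫⁻ s in Set.Ioo (0:ℝ) τs, (n : ℝ≥0∞) * F t s := lintegral_mono_ae hb
        _ = (n : ℝ≥0∞) * ∫⁻ s in Set.Ioo (0:ℝ) τs, F t s :=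
            lintegral_const_mul' _ _ (by simp)
        _ < ⊤ := ENNReal.mul_lt_top (by simp) (ht hmem)
    have h := ae_all_iff.mpr key
    filter_upwards [h] with t ht ht0
    exact ht ⌈t⌉₊ ⟨ht0, Nat.le_ceil t⟩
  -- the pointwise equivalence
  have key : ∀ᵐ t : ℝ, 0 < t →
      ((X t + (∑' k : ℕ, (A k) *ᵥ X (t - τ k))
        + (∫ s in Set.Ioo (0:ℝ) τs, (N s) *ᵥ X (t - s)) = 0) ↔
      (x t + (∑' k : ℕ, if τ k ≤ t then (A k) *ᵥ x (t - τ k) else 0)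
        + (∫ s in Set.Ioo (0:ℝ) (min t τs), (N s) *ᵥ x (t - s)) = f t)) := by
    filter_upwards [hP1, hP2, hP3, hP4] with t h1 h2 h3 h4 ht0
    have hxX : ∀ u : ℝ, 0 ≤ u → x u = X u := fun u hu => by rw [hx u, if_pos hu]
    set H := ∑' k : ℕ, if t < τ k then (A k) *ᵥ X₀ (t - τ k) else 0 with hH
    set J := ∫ s in Set.Ioo t τs, (N s) *ᵥ X₀ (t - s) with hJ
    -- termwise identity for the series
    have hterm : ∀ k : ℕ, (A k) *ᵥ X (t - τ k) =
        (if τ k ≤ t then (A k) *ᵥ x (t - τ k) else 0)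
        + (if t < τ k then (A k) *ᵥ X₀ (t - τ k) else 0) := by
      intro k
      rcases le_or_gt (τ k) t with h | h
      · rw [if_pos h, if_neg (not_lt.mpr h), add_zero, hxX (t - τ k) (by linarith)]
      · rw [if_neg (not_le.mpr h), if_pos h, zero_add,
          h2 k (Set.mem_Icc.mpr ⟨by have := (hτ k).2; linarith, by linarith⟩)]
    have hsb : Summable fun k : ℕ => (n : ℝ) * (‖A k‖ * ‖X (t - τ k)‖) :=
      (h1 ht0).mul_left _
    have hs0 : Summable fun k : ℕ => (A k) *ᵥ X (t - τ k) := by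
      refine Summable.of_norm_bounded hsb fun k => ?_
      calc ‖(A k) *ᵥ X (t - τ k)‖ ≤ (n : ℝ) * ‖A k‖ * ‖X (t - τ k)‖ := norm_mulVec_le' _ _
        _ = (n : ℝ) * (‖A k‖ * ‖X (t - τ k)‖) := by ring
    have hsg : Summable fun k : ℕ => if τ k ≤ t then (A k) *ᵥ x (t - τ k) else 0 := by
      refine Summable.of_norm_bounded hsb fun k => ?_
      split_ifs with h
      · rw [hxX (t - τ k) (by linarith)]
        calc ‖(A k) *ᵥ X (t - τ k)‖ ≤ (n : ℝ) * ‖A k‖ * ‖X (t - τ k)‖ := norm_mulVec_le' _ _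
          _ = (n : ℝ) * (‖A k‖ * ‖X (t - τ k)‖) := by ring
      · simp only [norm_zero]
        positivity
    have hsh : Summable fun k : ℕ => if t < τ k then (A k) *ᵥ X₀ (t - τ k) else 0 := by
      have heq : (fun k : ℕ => if t < τ k then (A k) *ᵥ X₀ (t - τ k) else 0)
          = fun k : ℕ => (A k) *ᵥ X (t - τ k)
            - (if τ k ≤ t then (A k) *ᵥ x (t - τ k) else 0) := by
        funext k
        rw [hterm k]
        abel
      rw [heq]
      exact hs0.sub hsg
    have hS : (∑' k : ℕ, (A k) *ᵥ X (t - τ k))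
        = (∑' k : ℕ, if τ k ≤ t then (A k) *ᵥ x (t - τ k) else 0) + H := by
      rw [hH, ← Summable.tsum_add hsg hsh]
      exact tsum_congr hterm
    -- splitting the integral
    set m' := min t τs with hm'
    have hm'0 : 0 < m' := lt_min ht0 hτs
    have hm'τ : m' ≤ τs := min_le_right _ _
    have hIint : IntegrableOn (fun s => (N s) *ᵥ X (t - s)) (Set.Ioo 0 τs) := h4 ht0
    have hsplitset : Set.Ioo (0:ℝ) τs = Set.Ioo 0 m' ∪ Set.Ico m' τs :=
      (Set.Ioo_union_Ico_eq_Ioo hm'0 hm'τ).symm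
    have hdisj : Disjoint (Set.Ioo (0:ℝ) m') (Set.Ico m' τs) :=
      Set.disjoint_left.mpr fun s hs hs' => absurd hs.2 (not_lt.mpr hs'.1)
    have hIsplit : (∫ s in Set.Ioo (0:ℝ) τs, (N s) *ᵥ X (t - s))
        = (∫ s in Set.Ioo (0:ℝ) m', (N s) *ᵥ X (t - s))
          + ∫ s in Set.Ico m' τs, (N s) *ᵥ X (t - s) := by
      rw [hsplitset]
      exact setIntegral_union hdisj measurableSet_Ico
        (hIint.mono_set (by rw [hsplitset]; exact Set.subset_union_left))
        (hIint.mono_set (by rw [hsplitset]; exact Set.subset_union_right))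
    have hI1 : (∫ s in Set.Ioo (0:ℝ) m', (N s) *ᵥ X (t - s))
        = ∫ s in Set.Ioo (0:ℝ) m', (N s) *ᵥ x (t - s) := by
      refine setIntegral_congr_fun measurableSet_Ioo fun s hs => ?_
      have hs2 : s < m' := hs.2
      have hmt : m' ≤ t := by rw [hm']; exact min_le_left t τs
      rw [hxX (t - s) (by linarith)]
    have hI2 : (∫ s in Set.Ico m' τs, (N s) *ᵥ X (t - s)) = J := by
      rcases le_or_gt τs t with h | h
      · have hmeq : m' = τs := min_eq_right h
        rw [hmeq, Set.Ico_self, hJ, Set.Ioo_eq_empty (not_lt.mpr h)]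
        simp
      · have hmeq : m' = t := min_eq_left h.le
        rw [hmeq, hJ, integral_Ico_eq_integral_Ioo]
        refine setIntegral_congr_ae measurableSet_Ioo ?_
        filter_upwards [h3] with s hs hmem
        have hmem1 : t < s := hmem.1
        have hmem2 : s < τs := hmem.2
        rw [hs (Set.mem_Icc.mpr ⟨by linarith, by linarith⟩)]
    -- computing f t
    have hft : f t = -(H + J) := by
      rw [hf t]
      rcases le_or_gt t τs with h | h
      · rw [Set.indicator_of_mem (Set.mem_Icc.mpr ⟨ht0.le, h⟩)]
      · rw [Set.indicator_of_notMem (fun hmem => absurd hmem.2 (not_le.mpr h))]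
        have hH0 : H = 0 := by
          rw [hH]
          convert tsum_zero with k
          rw [if_neg (not_lt.mpr ((hτ k).2.trans h.le))]
        have hJ0 : J = 0 := by
          rw [hJ, Set.Ioo_eq_empty (by intro hc; linarith)]
          simp
        rw [hH0, hJ0]
        simp
    -- conclude
    rw [hS, hIsplit, hI1, hI2, hft, hxX t ht0.le]
    constructor
    · intro h
      calc X t + (∑' k : ℕ, if τ k ≤ t then (A k) *ᵥ x (t - τ k) else 0)
            + ∫ s in Set.Ioo (0:ℝ) m', (N s) *ᵥ x (t - s)
          = (X t + ((∑' k : ℕ, if τ k ≤ t then (A k) *ᵥ x (t - τ k) else 0) + H)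
            + ((∫ s in Set.Ioo (0:ℝ) m', (N s) *ᵥ x (t - s)) + J)) - (H + J) := by abel
        _ = 0 - (H + J) := by rw [h]
        _ = -(H + J) := by abel
    · intro h
      calc X t + ((∑' k : ℕ, if τ k ≤ t then (A k) *ᵥ x (t - τ k) else 0) + H)
            + ((∫ s in Set.Ioo (0:ℝ) m', (N s) *ᵥ x (t - s)) + J)
          = (X t + (∑' k : ℕ, if τ k ≤ t then (A k) *ᵥ x (t - τ k) else 0)
            + ∫ s in Set.Ioo (0:ℝ) m', (N s) *ᵥ x (t - s)) + (H + J) := by abel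
        _ = -(H + J) + (H + J) := by rw [h]
        _ = 0 := by abel
  -- assemble
  have hne : ∀ᵐ t : ℝ, t ≠ 0 := by
    refine ae_iff.mpr ?_
    have : {t : ℝ | ¬ t ≠ 0} = {0} := by ext t; simp
    rw [this]
    exact MeasureTheory.measure_singleton 0
  constructor
  · intro h
    filter_upwards [key, h, hne] with t hk h1 hne0 ht0
    exact (hk (lt_of_le_of_ne ht0 (Ne.symm hne0))).mp (h1 (lt_of_le_of_ne ht0 (Ne.symm hne0)))
  · intro h
    filter_upwards [key, h] with t hk h1 ht0
    exact (hk ht0).mpr (h1 ht0.le)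
end
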